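/- arXiv:2507.05796 — 4 statements merged into one kernel-verified Lean document; each statement's English description precedes it below -/
import Mathlib

section
/- Let R = k[[x, y]] and I = (x^2 y + y^{n-1}) defining a D_n singularity. Then for all m ≤ n − 1, the m-th jet closure of I equals I + m^{m+1}, where m is the maximal ideal of R. -/
open Polynomial

/-- The truncated polynomial ring `A[t]/(t^(m+1))`. -/
abbrev JetTrunc (A : Type) [CommRing A] (m : ℕ) : Type :=
  Polynomial A ⧸ (Ideal.span {(X : Polynomial A) ^ (m + 1)} : Ideal (Polynomial A))

/-- The image of the variable `t` in `A[t]/(t^(m+1))`. -/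
noncomputable def jetT (A : Type) [CommRing A] (m : ℕ) : JetTrunc A m :=
  Ideal.Quotient.mk _ (X : Polynomial A)

/-- A test datum for the `m`-th jet closure of an ideal `I` of a local `k`-algebra `(R, 𝔪)`:
a `k`-algebra `A` together with a `k`-algebra map `φ : R → A[t]/(t^(m+1))` killing `I`
and sending the maximal ideal `𝔪` into `(t)` (i.e. an `A`-point of the scheme of local
`m`-jets of `Spec (R/I)` over the closed point). -/
structure JetTest (k : Type) [CommRing k] {R : Type} [CommRing R] [Algebra k R]
    (𝔪 : Ideal R) (m : ℕ) (I : Ideal R) where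
  A : Type
  [instCommRing : CommRing A]
  [instAlgebra : Algebra k A]
  φ : R →ₐ[k] JetTrunc A m
  ker_I : ∀ f ∈ I, φ f = 0
  max_to_t : ∀ f ∈ 𝔪, φ f ∈ Ideal.span {jetT A m}

attribute [instance] JetTest.instCommRing JetTest.instAlgebra

/-- The `m`-th jet closure `I^{m-jc}` of an ideal `I` in a local `k`-algebra `(R, 𝔪)`:
the intersection of the kernels of all jet test maps (functor-of-points description of the
kernel of `μ_m : R → R_m[t]/(t^(m+1), I_m, 𝔪^e)`). -/
noncomputable def jetClosure (k : Type) [CommRing k] {R : Type} [CommRing R] [Algebra k R]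
    (𝔪 : Ideal R) (m : ℕ) (I : Ideal R) : Ideal R :=
  sInf { J : Ideal R | ∃ T : JetTest k 𝔪 m I, J = RingHom.ker T.φ }

/-- The maximal ideal `(x_1, ..., x_n)` of the formal power series ring `k[[x_1, ..., x_n]]`. -/
noncomputable def mIdeal (k : Type) [Field k] (n : ℕ) : Ideal (MvPowerSeries (Fin n) k) :=
  RingHom.ker (MvPowerSeries.constantCoeff (σ := Fin n) (R := k))

/-- The variable `x` in `k[[x, y]]`. -/
noncomputable def xx (k : Type) [Field k] : MvPowerSeries (Fin 2) k := MvPowerSeries.X 0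

/-- The variable `y` in `k[[x, y]]`. -/
noncomputable def yy (k : Type) [Field k] : MvPowerSeries (Fin 2) k := MvPowerSeries.X 1


namespace JetDn

open MvPowerSeries

lemma eta2 (s : Fin 2 →₀ ℕ) : Finsupp.single 0 (s 0) + Finsupp.single 1 (s 1) = s := by
  ext a
  fin_cases a <;> simp [Finsupp.single_apply, Fin.ext_iff]

/-- The finset of exponents of total degree `d`. -/
noncomputable def Sd (d : ℕ) : Finset (Fin 2 →₀ ℕ) :=
  (Finset.range (d+1)).image (fun i => Finsupp.single 0 i + Finsupp.single (1 : Fin 2) (d - i))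

lemma mem_Sd {d : ℕ} {s : Fin 2 →₀ ℕ} : s ∈ Sd d ↔ s 0 + s 1 = d := by
  constructor
  · rintro hs
    simp only [Sd, Finset.mem_image, Finset.mem_range] at hs
    obtain ⟨i, hi, rfl⟩ := hs
    simp [Finsupp.single_apply, Fin.ext_iff]
    omega
  · intro h
    simp only [Sd, Finset.mem_image, Finset.mem_range]
    exact ⟨s 0, by omega, by rw [show d - s 0 = s 1 by omega]; exact eta2 s⟩

variable {k : Type} [Field k]

lemma le_of_apply_ne {s : Fin 2 →₀ ℕ} {i : Fin 2} (h : s i ≠ 0) :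
    Finsupp.single i 1 ≤ s := by
  intro a
  rcases Fin.exists_fin_two.mp ⟨a, rfl⟩ with rfl | rfl <;>
    rcases Fin.exists_fin_two.mp ⟨i, rfl⟩ with rfl | rfl <;>
      simp [Finsupp.single_apply] <;> omega

/-- Vanishing of all coefficients of total degree `< p` implies membership in `𝔪^p`. -/
lemma mem_mIdeal_pow {p : ℕ} {f : MvPowerSeries (Fin 2) k}
    (h : ∀ s : Fin 2 →₀ ℕ, s 0 + s 1 < p → MvPowerSeries.coeff s f = 0) :
    f ∈ (mIdeal k 2) ^ p := by
  classical
  induction p generalizing f with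
  | zero => simp
  | succ p ih =>
    set e0 : Fin 2 →₀ ℕ := Finsupp.single 0 1 with he0
    set e1 : Fin 2 →₀ ℕ := Finsupp.single 1 1 with he1
    set g : MvPowerSeries (Fin 2) k :=
      fun s => MvPowerSeries.coeff (s + e0) f with hg
    set r : MvPowerSeries (Fin 2) k := f - X 0 * g with hr
    set h1 : MvPowerSeries (Fin 2) k :=
      fun s => MvPowerSeries.coeff (s + e1) r with hh1
    have coeff_X0g : ∀ s : Fin 2 →₀ ℕ, MvPowerSeries.coeff s (X 0 * g) =
        if e0 ≤ s then MvPowerSeries.coeff (s - e0) g else 0 := by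
      intro s
      rw [MvPowerSeries.X, MvPowerSeries.coeff_monomial_mul]
      simp [he0, Finsupp.single_le_iff]
    have hrs : ∀ s : Fin 2 →₀ ℕ, s 0 ≠ 0 → MvPowerSeries.coeff s r = 0 := by
      intro s hs0
      have hle : e0 ≤ s := le_of_apply_ne hs0
      rw [hr, map_sub, coeff_X0g, if_pos hle, hg]
      show MvPowerSeries.coeff s f - MvPowerSeries.coeff (s - e0 + e0) f = 0
      rw [tsub_add_cancel_of_le hle, sub_self]
    have hrX1 : r = X 1 * h1 := by
      ext s
      rw [MvPowerSeries.X, MvPowerSeries.coeff_monomial_mul]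
      by_cases h1s : e1 ≤ s
      · rw [if_pos h1s, one_mul, hh1]
        show MvPowerSeries.coeff s r = MvPowerSeries.coeff (s - e1 + e1) r
        rw [tsub_add_cancel_of_le h1s]
      · rw [if_neg h1s]
        have hs1 : s 1 = 0 := by
          by_contra hne
          exact h1s (le_of_apply_ne hne)
        by_cases hs0 : s 0 = 0
        · have hs : s = 0 := by
            ext a
            rcases Fin.exists_fin_two.mp ⟨a, rfl⟩ with rfl | rfl <;> simp [hs0, hs1]
          rw [hs]
          rw [hr, map_sub, coeff_X0g]
          have : ¬ (e0 ≤ (0 : Fin 2 →₀ ℕ)) := by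
            intro hc
            simpa [he0] using hc 0
          rw [if_neg this, sub_zero]
          exact h 0 (by simp)
        · exact hrs s hs0
    have hf : f = X 0 * g + X 1 * h1 := by
      rw [← hrX1, hr]; ring
    have hgmem : g ∈ (mIdeal k 2) ^ p := by
      apply ih
      intro s hs
      apply h
      simp [he0, Finsupp.single_apply]
      omega
    have hh1mem : h1 ∈ (mIdeal k 2) ^ p := by
      apply ih
      intro s hs
      by_cases hs0 : s 0 = 0
      · show MvPowerSeries.coeff (s + e1) r = 0
        rw [hr, map_sub, coeff_X0g]
        have : ¬ (e0 ≤ s + e1) := by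
          intro hc
          have := hc 0
          simp [he0, he1, Finsupp.single_apply] at this
          omega
        rw [if_neg this, sub_zero]
        apply h
        simp [he1, Finsupp.single_apply]
        omega
      · exact hrs _ (by simp [he1, Finsupp.single_apply]; omega)
    have hXmem : ∀ i : Fin 2, X i ∈ mIdeal k 2 := by
      intro i
      simp [mIdeal, RingHom.mem_ker]
    rw [hf, pow_succ']
    exact Ideal.add_mem _ (Ideal.mul_mem_mul (hXmem 0) hgmem)
      (Ideal.mul_mem_mul (hXmem 1) hh1mem)


/-- Truncation of a power series to total degree `≤ m`, as a polynomial. -/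
noncomputable def ptrunc (m : ℕ) (f : MvPowerSeries (Fin 2) k) : MvPolynomial (Fin 2) k :=
  ∑ d ∈ Finset.range (m+1), ∑ s ∈ Sd d, MvPolynomial.monomial s (MvPowerSeries.coeff s f)

lemma coeff_ptrunc (m : ℕ) (f : MvPowerSeries (Fin 2) k) (s : Fin 2 →₀ ℕ) :
    MvPolynomial.coeff s (ptrunc m f) =
      if s 0 + s 1 ≤ m then MvPowerSeries.coeff s f else 0 := by
  classical
  rw [ptrunc]
  simp only [MvPolynomial.coeff_sum, MvPolynomial.coeff_monomial]
  have h1 : ∀ d ∈ Finset.range (m+1),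
      (∑ t ∈ Sd d, if t = s then MvPowerSeries.coeff t f else 0)
      = if s 0 + s 1 = d then MvPowerSeries.coeff s f else 0 := by
    intro d _
    rw [Finset.sum_ite_eq' (Sd d) s (fun t => MvPowerSeries.coeff t f)]
    simp [mem_Sd]
  rw [Finset.sum_congr rfl h1, Finset.sum_ite_eq (Finset.range (m+1)) (s 0 + s 1)]
  simp only [Finset.mem_range, Nat.lt_succ_iff]

lemma ptrunc_add (m : ℕ) (f g : MvPowerSeries (Fin 2) k) :
    ptrunc m (f + g) = ptrunc m f + ptrunc m g := by
  apply MvPolynomial.ext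
  intro s
  simp only [MvPolynomial.coeff_add, coeff_ptrunc, map_add]
  split <;> simp

lemma sub_ptrunc_mem (m : ℕ) (f : MvPowerSeries (Fin 2) k) :
    f - (ptrunc m f : MvPolynomial (Fin 2) k) ∈ (mIdeal k 2) ^ (m+1) := by
  apply mem_mIdeal_pow
  intro s hs
  rw [map_sub, MvPolynomial.coeff_coe, coeff_ptrunc, if_pos (by omega), sub_self]


section Sub

variable {A : Type} [CommRing A] [Algebra k A] {m : ℕ}
variable (v : Fin 2 → Polynomial A)

lemma aeval_monomial_mem (hv : ∀ i, v i ∈ Ideal.span {(X : Polynomial A)})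
    (s : Fin 2 →₀ ℕ) (c : k) {p : ℕ} (hp : p ≤ s 0 + s 1) :
    MvPolynomial.aeval v (MvPolynomial.monomial s c) ∈
      Ideal.span {(X : Polynomial A) ^ p} := by
  have h1 : MvPolynomial.aeval v (MvPolynomial.monomial s c)
      = algebraMap k (Polynomial A) c * (v 0 ^ s 0 * v 1 ^ s 1) := by
    rw [MvPolynomial.aeval_monomial]
    congr 1
    rw [Finsupp.prod_fintype _ _ (fun i => pow_zero (v i)), Fin.prod_univ_two]
  rw [h1]
  have h2 : v 0 ^ s 0 * v 1 ^ s 1 ∈ Ideal.span {(X : Polynomial A)} ^ (s 0 + s 1) := by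
    rw [pow_add]
    exact Ideal.mul_mem_mul (Ideal.pow_mem_pow (hv 0) _) (Ideal.pow_mem_pow (hv 1) _)
  rw [Ideal.span_singleton_pow] at h2
  have h3 : Ideal.span {(X : Polynomial A) ^ (s 0 + s 1)} ≤
      Ideal.span {(X : Polynomial A) ^ p} := by
    rw [Ideal.span_singleton_le_span_singleton]
    exact pow_dvd_pow _ hp
  exact Ideal.mul_mem_left _ _ (h3 h2)

lemma aeval_lowzero_mem (hv : ∀ i, v i ∈ Ideal.span {(X : Polynomial A)})
    {p : ℕ} (P : MvPolynomial (Fin 2) k)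
    (h : ∀ s : Fin 2 →₀ ℕ, s 0 + s 1 < p → MvPolynomial.coeff s P = 0) :
    MvPolynomial.aeval v P ∈ Ideal.span {(X : Polynomial A) ^ p} := by
  classical
  rw [← MvPolynomial.support_sum_monomial_coeff P, map_sum]
  apply Ideal.sum_mem
  intro s hs
  apply aeval_monomial_mem v hv
  by_contra hc
  exact (MvPolynomial.mem_support_iff.mp hs) (h s (by omega))

/-- The jet substitution map `f ↦ (aeval v (ptrunc m f) mod X^(m+1))`. -/
noncomputable def jetHom (hv : ∀ i, v i ∈ Ideal.span {(X : Polynomial A)}) (m : ℕ) :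
    MvPowerSeries (Fin 2) k →ₐ[k] JetTrunc A m where
  toFun f := Ideal.Quotient.mk _ (MvPolynomial.aeval v (ptrunc m f))
  map_add' f g := by
    show Ideal.Quotient.mk _ (MvPolynomial.aeval v (ptrunc m (f + g))) = _
    rw [ptrunc_add, map_add, map_add]
  map_zero' := by
    show Ideal.Quotient.mk _ (MvPolynomial.aeval v (ptrunc m (0 : MvPowerSeries (Fin 2) k))) = _
    have : ptrunc m (0 : MvPowerSeries (Fin 2) k) = 0 := by
      apply MvPolynomial.ext; intro s; simp [coeff_ptrunc]
    rw [this, map_zero, map_zero]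
  map_one' := by
    show Ideal.Quotient.mk _ (MvPolynomial.aeval v (ptrunc m (1 : MvPowerSeries (Fin 2) k))) = _
    have : ptrunc m (1 : MvPowerSeries (Fin 2) k) = 1 := by
      apply MvPolynomial.ext
      intro s
      rw [coeff_ptrunc]
      by_cases hs : s = 0
      · subst hs; simp
      · rw [MvPowerSeries.coeff_one, if_neg hs, MvPolynomial.coeff_one, if_neg (Ne.symm hs)]
        simp
    rw [this, map_one, map_one]
  map_mul' f g := by
    show Ideal.Quotient.mk _ (MvPolynomial.aeval v (ptrunc m (f * g))) =
      Ideal.Quotient.mk _ (MvPolynomial.aeval v (ptrunc m f)) *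
      Ideal.Quotient.mk _ (MvPolynomial.aeval v (ptrunc m g))
    rw [← map_mul, ← map_mul, Ideal.Quotient.mk_eq_mk_iff_sub_mem, ← map_sub]
    apply aeval_lowzero_mem v hv
    intro s hs
    classical
    rw [MvPolynomial.coeff_sub, MvPolynomial.coeff_mul, coeff_ptrunc, if_pos (by omega),
      MvPowerSeries.coeff_mul, sub_eq_zero]
    apply Finset.sum_congr rfl
    intro p hp
    rw [Finset.HasAntidiagonal.mem_antidiagonal] at hp
    have h0 : p.1 0 + p.2 0 = s 0 := by rw [← Finsupp.add_apply, hp]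
    have h1 : p.1 1 + p.2 1 = s 1 := by rw [← Finsupp.add_apply, hp]
    rw [coeff_ptrunc, coeff_ptrunc, if_pos (by omega), if_pos (by omega)]
  commutes' c := by
    show Ideal.Quotient.mk _
      (MvPolynomial.aeval v (ptrunc m (algebraMap k (MvPowerSeries (Fin 2) k) c))) = _
    have : ptrunc m (algebraMap k (MvPowerSeries (Fin 2) k) c) = MvPolynomial.C c := by
      apply MvPolynomial.ext
      intro s
      rw [coeff_ptrunc, MvPolynomial.coeff_C]
      have h4 : algebraMap k (MvPowerSeries (Fin 2) k) c = MvPowerSeries.C (σ := Fin 2) (R := k) c := rfl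
      rw [h4, MvPowerSeries.coeff_C]
      by_cases hs : s = 0
      · subst hs; simp
      · rw [if_neg hs, if_neg (Ne.symm hs)]; simp
    rw [this, MvPolynomial.aeval_C]
    rfl

lemma jetHom_apply (hv : ∀ i, v i ∈ Ideal.span {(X : Polynomial A)}) (m : ℕ)
    (f : MvPowerSeries (Fin 2) k) :
    jetHom v hv m f = Ideal.Quotient.mk _ (MvPolynomial.aeval v (ptrunc m f)) := rfl

lemma jetHom_maxToT (hv : ∀ i, v i ∈ Ideal.span {(X : Polynomial A)}) (m : ℕ)
    (f : MvPowerSeries (Fin 2) k) (hf : f ∈ mIdeal k 2) :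
    jetHom v hv m f ∈ Ideal.span {jetT A m} := by
  have h1 : MvPolynomial.aeval v (ptrunc m f) ∈ Ideal.span {(X : Polynomial A)} := by
    have := aeval_lowzero_mem v hv (p := 1) (ptrunc m f) ?_
    · simpa using this
    · intro s hs
      have hs0 : s = 0 := by
        ext a
        rcases Fin.exists_fin_two.mp ⟨a, rfl⟩ with rfl | rfl <;>
          simp only [Finsupp.coe_zero, Pi.zero_apply] <;> omega
      subst hs0
      rw [coeff_ptrunc, if_pos (by omega)]
      have : MvPowerSeries.coeff 0 f = MvPowerSeries.constantCoeff (σ := Fin 2) (R := k) f := rfl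
      rw [this]
      exact RingHom.mem_ker.mp hf
  have : jetHom v hv m f ∈ Ideal.map (Ideal.Quotient.mk
      (Ideal.span {(X : Polynomial A) ^ (m+1)})) (Ideal.span {(X : Polynomial A)}) :=
    Ideal.mem_map_of_mem _ h1
  rwa [Ideal.map_span, Set.image_singleton] at this

end Sub

section General

variable {k : Type} [CommRing k] {R : Type} [CommRing R] [Algebra k R]
  {𝔪 : Ideal R} {m : ℕ} {I : Ideal R}

lemma jetTest_ker_pow (T : JetTest k 𝔪 m I) {f : R} (hf : f ∈ 𝔪 ^ (m+1)) : T.φ f = 0 := by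
  have h1 : T.φ f ∈ Ideal.map T.φ (𝔪 ^ (m+1)) := Ideal.mem_map_of_mem _ hf
  rw [Ideal.map_pow] at h1
  have h2 : Ideal.map T.φ 𝔪 ≤ Ideal.span {jetT T.A m} := by
    rw [Ideal.map_le_iff_le_comap]
    intro x hx
    exact T.max_to_t x hx
  have h3 : T.φ f ∈ Ideal.span {jetT T.A m} ^ (m+1) := (Ideal.pow_right_mono h2 (m+1)) h1
  rw [Ideal.span_singleton_pow] at h3
  have h4 : jetT T.A m ^ (m+1) = 0 := by
    rw [jetT, ← map_pow]
    exact Ideal.Quotient.eq_zero_iff_mem.mpr (Ideal.mem_span_singleton_self _)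
  rw [h4] at h3
  rw [Ideal.span_singleton_eq_bot.mpr rfl] at h3
  simpa using h3

lemma le_jetClosure : I ⊔ 𝔪 ^ (m+1) ≤ jetClosure k 𝔪 m I := by
  apply le_sInf
  rintro J ⟨T, rfl⟩
  apply sup_le
  · intro f hf
    exact RingHom.mem_ker.mpr (T.ker_I f hf)
  · intro f hf
    exact RingHom.mem_ker.mpr (jetTest_ker_pow T hf)

lemma jetTrunc_mk_eq_zero_iff {B : Type} [CommRing B] (m : ℕ) (p : Polynomial B) :
    Ideal.Quotient.mk (Ideal.span {(Polynomial.X : Polynomial B) ^ (m+1)}) p = 0 ↔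
      ∀ d ≤ m, p.coeff d = 0 := by
  rw [Ideal.Quotient.eq_zero_iff_mem, Ideal.mem_span_singleton, Polynomial.X_pow_dvd_iff]
  exact ⟨fun h d hd => h d (by omega), fun h d hd => h d (by omega)⟩

lemma jetTrunc_C_X_pow_eq_zero {B : Type} [CommRing B] {m d : ℕ} {b : B}
    (hd : d ≤ m)
    (h : Ideal.Quotient.mk (Ideal.span {(Polynomial.X : Polynomial B) ^ (m+1)})
      (Polynomial.C b * Polynomial.X ^ d) = 0) : b = 0 := by
  rw [jetTrunc_mk_eq_zero_iff] at h
  have := h d hd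
  simpa using this

end General

section T1

variable {k : Type} [Field k]

lemma monomial_eq_prod (s : Fin 2 →₀ ℕ) (c : k) :
    (MvPowerSeries.monomial (R := k) s c) =
      MvPowerSeries.C (σ := Fin 2) (R := k) c * MvPowerSeries.X 0 ^ s 0 * MvPowerSeries.X 1 ^ s 1 := by
  rw [MvPowerSeries.X_pow_eq, MvPowerSeries.X_pow_eq]
  have hC : (MvPowerSeries.C (σ := Fin 2) (R := k) c) = MvPowerSeries.monomial (R := k) 0 c := rfl
  rw [hC, MvPowerSeries.monomial_mul_monomial, MvPowerSeries.monomial_mul_monomial]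
  rw [mul_one, mul_one, zero_add, eta2]

/-- The `d`-th homogeneous component of a power series. -/
noncomputable def hsum (d : ℕ) (f : MvPowerSeries (Fin 2) k) : MvPowerSeries (Fin 2) k :=
  ∑ s ∈ Sd d, MvPowerSeries.monomial (R := k) s (MvPowerSeries.coeff s f)

lemma coeff_hsum (d : ℕ) (f : MvPowerSeries (Fin 2) k) (s : Fin 2 →₀ ℕ) :
    MvPowerSeries.coeff s (hsum d f) =
      if s 0 + s 1 = d then MvPowerSeries.coeff s f else 0 := by
  classical
  rw [hsum, map_sum]
  have h1 : ∀ t ∈ Sd d, MvPowerSeries.coeff s (MvPowerSeries.monomial (R := k) t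
      (MvPowerSeries.coeff t f)) = if t = s then MvPowerSeries.coeff t f else 0 := by
    intro t _
    rw [MvPowerSeries.coeff_monomial]
    by_cases h : s = t
    · subst h; simp
    · rw [if_neg h, if_neg (Ne.symm h)]
  rw [Finset.sum_congr rfl h1, Finset.sum_ite_eq' (Sd d) s]
  simp [mem_Sd]

lemma hsum_monomial (d : ℕ) (t : Fin 2 →₀ ℕ) (a : k) :
    hsum d (MvPowerSeries.monomial (R := k) t a) =
      if t 0 + t 1 = d then MvPowerSeries.monomial (R := k) t a else 0 := by
  classical
  by_cases hd : t 0 + t 1 = d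
  · rw [if_pos hd]
    apply MvPowerSeries.ext; intro s
    rw [coeff_hsum]
    by_cases h : s = t
    · subst h; simp [hd]
    · simp [MvPowerSeries.coeff_monomial, h]
  · rw [if_neg hd]
    apply MvPowerSeries.ext; intro s
    rw [coeff_hsum]
    by_cases h : s = t
    · subst h; simp [hd]
    · simp [MvPowerSeries.coeff_monomial, h]

lemma hsum_add (d : ℕ) (f g : MvPowerSeries (Fin 2) k) :
    hsum d (f + g) = hsum d f + hsum d g := by
  apply MvPowerSeries.ext
  intro s
  rw [map_add, coeff_hsum, coeff_hsum, coeff_hsum, map_add]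
  split <;> simp

lemma sub_sum_hsum_mem (m : ℕ) (f : MvPowerSeries (Fin 2) k) :
    f - ∑ d ∈ Finset.range (m+1), hsum d f ∈ (mIdeal k 2) ^ (m+1) := by
  classical
  apply mem_mIdeal_pow
  intro s hs
  rw [map_sub, map_sum]
  have h1 : ∀ d ∈ Finset.range (m+1), MvPowerSeries.coeff s (hsum d f)
      = if s 0 + s 1 = d then MvPowerSeries.coeff s f else 0 :=
    fun d _ => coeff_hsum d f s
  rw [Finset.sum_congr rfl h1, Finset.sum_ite_eq (Finset.range (m+1)) (s 0 + s 1)]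
  rw [if_pos (Finset.mem_range.mpr (by omega)), sub_self]

variable (k) in
/-- The ideal `(x²y, y^(n-1))`. -/
noncomputable def JDn (n : ℕ) : Ideal (MvPowerSeries (Fin 2) k) :=
  Ideal.span {xx k ^ 2 * yy k, yy k ^ (n-1)}

variable (k) in
abbrev A1 (n : ℕ) : Type := MvPowerSeries (Fin 2) k ⧸ JDn k n

variable (k) in
noncomputable def q1 (n : ℕ) : MvPowerSeries (Fin 2) k →+* A1 k n :=
  Ideal.Quotient.mk (JDn k n)

variable (k) in
noncomputable def v1 (n : ℕ) : Fin 2 → Polynomial (A1 k n) :=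
  fun i => Polynomial.C (q1 k n (MvPowerSeries.X i)) * Polynomial.X

lemma hv1 (n : ℕ) : ∀ i, v1 k n i ∈ Ideal.span {(Polynomial.X : Polynomial (A1 k n))} :=
  fun i => Ideal.mul_mem_left _ _ (Ideal.subset_span (Set.mem_singleton _))

lemma aeval_v1_monomial (n : ℕ) (s : Fin 2 →₀ ℕ) (c : k) :
    MvPolynomial.aeval (v1 k n) (MvPolynomial.monomial s c) =
      Polynomial.C (q1 k n (MvPowerSeries.monomial (R := k) s c)) * Polynomial.X ^ (s 0 + s 1) := by
  rw [MvPolynomial.aeval_monomial, Finsupp.prod_fintype _ _ (fun i => pow_zero _),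
    Fin.prod_univ_two]
  have h1 : algebraMap k (Polynomial (A1 k n)) c
      = Polynomial.C (q1 k n (MvPowerSeries.C (σ := Fin 2) (R := k) c)) := rfl
  rw [monomial_eq_prod, h1]
  simp only [v1, map_mul, map_pow, mul_pow]
  rw [← Polynomial.C_pow, ← Polynomial.C_pow]
  simp only [Polynomial.C_pow]
  ring

lemma coeff_aeval_v1_ptrunc (n m : ℕ) (f : MvPowerSeries (Fin 2) k) {d : ℕ} (hd : d ≤ m) :
    (MvPolynomial.aeval (v1 k n) (ptrunc m f)).coeff d = q1 k n (hsum d f) := by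
  classical
  rw [ptrunc, map_sum]
  rw [Polynomial.finset_sum_coeff]
  have h1 : ∀ d' ∈ Finset.range (m+1),
      (MvPolynomial.aeval (v1 k n) (∑ s ∈ Sd d',
        MvPolynomial.monomial s (MvPowerSeries.coeff s f))).coeff d
      = if d = d' then q1 k n (hsum d' f) else 0 := by
    intro d' _
    rw [map_sum, Polynomial.finset_sum_coeff]
    have h2 : ∀ s ∈ Sd d', (MvPolynomial.aeval (v1 k n)
        (MvPolynomial.monomial s (MvPowerSeries.coeff s f))).coeff d
        = if d = d' then q1 k n (MvPowerSeries.monomial (R := k) s (MvPowerSeries.coeff s f))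
          else 0 := by
      intro s hs
      rw [aeval_v1_monomial, Polynomial.coeff_C_mul, Polynomial.coeff_X_pow,
        mem_Sd.mp hs]
      split <;> simp
    rw [Finset.sum_congr rfl h2]
    by_cases h : d = d'
    · rw [if_pos h]
      rw [Finset.sum_congr rfl (fun s _ => if_pos h), hsum, map_sum]
    · rw [if_neg h]
      rw [Finset.sum_congr rfl (fun s _ => if_neg h), Finset.sum_const_zero]
  rw [Finset.sum_congr rfl h1, Finset.sum_ite_eq (Finset.range (m+1)) d]
  rw [if_pos (Finset.mem_range.mpr (by omega))]

lemma T1_hsum_mem (n m : ℕ) (f : MvPowerSeries (Fin 2) k)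
    (hker : jetHom (v1 k n) (hv1 n) m f = 0) {d : ℕ} (hd : d ≤ m) :
    hsum d f ∈ JDn k n := by
  rw [jetHom_apply, jetTrunc_mk_eq_zero_iff] at hker
  have := hker d hd
  rw [coeff_aeval_v1_ptrunc n m f hd] at this
  exact Ideal.Quotient.eq_zero_iff_mem.mp this

end T1

section T1b

variable {k : Type} [Field k]

lemma mono1_eq : (MvPowerSeries.monomial (R := k) (Finsupp.single 0 2 + Finsupp.single 1 1) 1)
    = xx k ^ 2 * yy k := by
  rw [monomial_eq_prod]
  have h0 : ((Finsupp.single 0 2 + Finsupp.single 1 1 : Fin 2 →₀ ℕ)) 0 = 2 := by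
    simp [Finsupp.single_apply]
  have h1 : ((Finsupp.single 0 2 + Finsupp.single 1 1 : Fin 2 →₀ ℕ)) 1 = 1 := by
    simp [Finsupp.single_apply]
  rw [h0, h1, map_one, one_mul, pow_one]
  rfl

lemma mono2_eq (n : ℕ) : (MvPowerSeries.monomial (R := k) (Finsupp.single 1 (n-1)) 1)
    = yy k ^ (n-1) := by
  rw [monomial_eq_prod]
  have h0 : ((Finsupp.single 1 (n-1) : Fin 2 →₀ ℕ)) 0 = 0 := by
    simp [Finsupp.single_apply]
  have h1 : ((Finsupp.single 1 (n-1) : Fin 2 →₀ ℕ)) 1 = n - 1 := by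
    simp [Finsupp.single_apply]
  rw [h0, h1, map_one, one_mul, pow_zero, one_mul]
  rfl

lemma g_eq (n : ℕ) : xx k ^ 2 * yy k + yy k ^ (n-1) =
    MvPowerSeries.monomial (R := k) (Finsupp.single 0 2 + Finsupp.single 1 1) 1
      + MvPowerSeries.monomial (R := k) (Finsupp.single 1 (n-1)) 1 := by
  rw [mono1_eq, mono2_eq]

lemma hsum_g_mem (n d : ℕ) :
    hsum d (xx k ^ 2 * yy k + yy k ^ (n-1)) ∈ JDn k n := by
  rw [g_eq, hsum_add, hsum_monomial, hsum_monomial]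
  apply Ideal.add_mem
  · split
    · rw [mono1_eq]
      exact Ideal.subset_span (by simp)
    · exact Ideal.zero_mem _
  · split
    · rw [mono2_eq]
      exact Ideal.subset_span (by simp)
    · exact Ideal.zero_mem _

lemma Phi1_g (n m : ℕ) :
    jetHom (v1 k n) (hv1 n) m (xx k ^ 2 * yy k + yy k ^ (n-1)) = 0 := by
  rw [jetHom_apply, jetTrunc_mk_eq_zero_iff]
  intro d hd
  rw [coeff_aeval_v1_ptrunc n m _ hd]
  exact Ideal.Quotient.eq_zero_iff_mem.mpr (hsum_g_mem n d)

lemma ker_I_of_g_zero {A : Type} [CommRing A] [Algebra k A] {m : ℕ}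
    (φ : MvPowerSeries (Fin 2) k →ₐ[k] JetTrunc A m) {g : MvPowerSeries (Fin 2) k}
    (hg : φ g = 0) : ∀ f ∈ Ideal.span {g}, φ f = 0 := by
  intro f hf
  rw [Ideal.mem_span_singleton] at hf
  obtain ⟨c, rfl⟩ := hf
  rw [map_mul, hg, zero_mul]

variable (k) in
/-- The first test: substitution `x ↦ x̄ t`, `y ↦ ȳ t` over `R/(x²y, y^(n-1))`. -/
noncomputable def T1 (n m : ℕ) :
    JetTest k (mIdeal k 2) m (Ideal.span {xx k ^ 2 * yy k + yy k ^ (n-1)}) where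
  A := A1 k n
  φ := jetHom (v1 k n) (hv1 n) m
  ker_I := ker_I_of_g_zero _ (Phi1_g n m)
  max_to_t := fun f hf => jetHom_maxToT (v1 k n) (hv1 n) m f hf

lemma yy_mem_m : yy k ∈ mIdeal k 2 := by
  rw [mIdeal, RingHom.mem_ker]
  exact MvPowerSeries.constantCoeff_X 1

lemma T1_decomp (n m : ℕ) (hm : m + 1 ≤ n) (f : MvPowerSeries (Fin 2) k)
    (hker : jetHom (v1 k n) (hv1 n) m f = 0) :
    ∃ c : k, f - MvPowerSeries.C (σ := Fin 2) (R := k) c * yy k ^ (n-1) ∈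
      Ideal.span {xx k ^ 2 * yy k + yy k ^ (n-1)} ⊔ (mIdeal k 2) ^ (m+1) := by
  have hW : (∑ d ∈ Finset.range (m+1), hsum d f) ∈ JDn k n :=
    Ideal.sum_mem _ (fun d hd =>
      T1_hsum_mem n m f hker (Nat.lt_succ_iff.mp (Finset.mem_range.mp hd)))
  rw [JDn, Ideal.mem_span_pair] at hW
  obtain ⟨P, Q, hPQ⟩ := hW
  set c := MvPowerSeries.constantCoeff (σ := Fin 2) (R := k) (Q - P) with hc
  refine ⟨c, ?_⟩
  have hid : f - MvPowerSeries.C (σ := Fin 2) (R := k) c * yy k ^ (n-1)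
      = P * (xx k ^ 2 * yy k + yy k ^ (n-1))
        + (((Q - P) - MvPowerSeries.C (σ := Fin 2) (R := k) c) * yy k ^ (n-1)
          + (f - ∑ d ∈ Finset.range (m+1), hsum d f)) := by
    rw [← hPQ]; ring
  rw [hid]
  apply Ideal.add_mem
  · exact Ideal.mem_sup_left (Ideal.mul_mem_left _ _ (Ideal.subset_span (by simp)))
  · apply Ideal.mem_sup_right
    apply Ideal.add_mem
    · have h1 : (Q - P) - MvPowerSeries.C (σ := Fin 2) (R := k) c ∈ mIdeal k 2 := by
        rw [mIdeal, RingHom.mem_ker, map_sub, MvPowerSeries.constantCoeff_C, hc, sub_self]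
      have h2 : yy k ^ (n-1) ∈ (mIdeal k 2) ^ (n-1) := Ideal.pow_mem_pow yy_mem_m _
      have h3 := Ideal.mul_mem_mul h1 h2
      rw [← pow_succ'] at h3
      have hn1 : n - 1 + 1 = n := by omega
      rw [hn1] at h3
      exact Ideal.pow_le_pow_right hm h3
    · exact sub_sum_hsum_mem m f

end T1b

section T2

variable {k : Type} [Field k] {A : Type} [CommRing A] [Algebra k A]

lemma ptrunc_monomial (m : ℕ) (t : Fin 2 →₀ ℕ) (a : k) (ht : t 0 + t 1 ≤ m) :
    ptrunc m (MvPowerSeries.monomial (R := k) t a) = MvPolynomial.monomial t a := by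
  classical
  apply MvPolynomial.ext
  intro s
  rw [coeff_ptrunc, MvPolynomial.coeff_monomial, MvPowerSeries.coeff_monomial]
  by_cases h : s = t
  · subst h; simp [ht]
  · rw [if_neg h, if_neg (Ne.symm h)]
    split <;> rfl

lemma jetHom_monomial (v : Fin 2 → Polynomial A)
    (hv : ∀ i, v i ∈ Ideal.span {(Polynomial.X : Polynomial A)}) (m : ℕ)
    (t : Fin 2 →₀ ℕ) (a : k) (ht : t 0 + t 1 ≤ m) :
    jetHom v hv m (MvPowerSeries.monomial (R := k) t a) =
      Ideal.Quotient.mk _ (algebraMap k (Polynomial A) a * (v 0 ^ t 0 * v 1 ^ t 1)) := by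
  rw [jetHom_apply, ptrunc_monomial m t a ht, MvPolynomial.aeval_monomial,
    Finsupp.prod_fintype _ _ (fun i => pow_zero _), Fin.prod_univ_two]

lemma jetHom_g_eval (v : Fin 2 → Polynomial A)
    (hv : ∀ i, v i ∈ Ideal.span {(Polynomial.X : Polynomial A)}) (n : ℕ) (hn : 4 ≤ n) :
    jetHom v hv (n-1) (xx k ^ 2 * yy k + yy k ^ (n-1)) =
      Ideal.Quotient.mk _ (v 0 ^ 2 * v 1 + v 1 ^ (n-1)) := by
  have h10 : ((Finsupp.single 0 2 + Finsupp.single 1 1 : Fin 2 →₀ ℕ)) 0 = 2 := by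
    simp [Finsupp.single_apply]
  have h11 : ((Finsupp.single 0 2 + Finsupp.single 1 1 : Fin 2 →₀ ℕ)) 1 = 1 := by
    simp [Finsupp.single_apply]
  have h20 : ((Finsupp.single 1 (n-1) : Fin 2 →₀ ℕ)) 0 = 0 := by
    simp [Finsupp.single_apply]
  have h21 : ((Finsupp.single 1 (n-1) : Fin 2 →₀ ℕ)) 1 = n - 1 := by
    simp [Finsupp.single_apply]
  rw [g_eq n, map_add, jetHom_monomial v hv _ _ _ (by rw [h10, h11]; omega),
    jetHom_monomial v hv _ _ _ (by rw [h20, h21]; omega), ← map_add]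
  congr 1
  rw [h10, h11, h20, h21, map_one, one_mul, one_mul, pow_one, pow_zero, one_mul]

lemma jetHom_yn_eval (v : Fin 2 → Polynomial A)
    (hv : ∀ i, v i ∈ Ideal.span {(Polynomial.X : Polynomial A)}) (n : ℕ) (hn : 4 ≤ n) :
    jetHom v hv (n-1) (yy k ^ (n-1)) = Ideal.Quotient.mk _ (v 1 ^ (n-1)) := by
  have h20 : ((Finsupp.single 1 (n-1) : Fin 2 →₀ ℕ)) 0 = 0 := by
    simp [Finsupp.single_apply]
  have h21 : ((Finsupp.single 1 (n-1) : Fin 2 →₀ ℕ)) 1 = n - 1 := by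
    simp [Finsupp.single_apply]
  rw [← mono2_eq n, jetHom_monomial v hv _ _ _ (by rw [h20, h21]; omega)]
  congr 1
  rw [h20, h21, map_one, one_mul, pow_zero, one_mul]

lemma jetHom_C_mul (v : Fin 2 → Polynomial A)
    (hv : ∀ i, v i ∈ Ideal.span {(Polynomial.X : Polynomial A)}) (m : ℕ)
    (c : k) (f : MvPowerSeries (Fin 2) k) :
    jetHom v hv m (MvPowerSeries.C (σ := Fin 2) (R := k) c * f) =
      Ideal.Quotient.mk (Ideal.span {(Polynomial.X : Polynomial A) ^ (m+1)})
        (Polynomial.C (algebraMap k A c)) * jetHom v hv m f := by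
  rw [map_mul]
  congr 1
  have h1 : MvPowerSeries.C (σ := Fin 2) (R := k) c = algebraMap k (MvPowerSeries (Fin 2) k) c := rfl
  rw [h1, AlgHom.commutes]
  rfl

end T2

section T2main

variable {k : Type} [Field k]

lemma exists_T2 [IsAlgClosed k] (n : ℕ) (hn : 4 ≤ n) :
    ∃ T : JetTest k (mIdeal k 2) (n-1) (Ideal.span {xx k ^ 2 * yy k + yy k ^ (n-1)}),
      ∀ c : k, T.φ (MvPowerSeries.C (σ := Fin 2) (R := k) c * yy k ^ (n-1)) = 0 → c = 0 := by
  rcases Nat.even_or_odd n with he | ho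
  · -- even case : A = k, x ↦ z t^((n-2)/2), y ↦ t, z² = -1
    have he2 : n % 2 = 0 := Nat.even_iff.mp he
    obtain ⟨z, hz⟩ := IsAlgClosed.exists_pow_nat_eq (-1 : k) (n := 2) (by norm_num)
    set v : Fin 2 → Polynomial k :=
      ![Polynomial.C z * Polynomial.X ^ ((n-2)/2), Polynomial.X] with hvdef
    have hv0 : v 0 = Polynomial.C z * Polynomial.X ^ ((n-2)/2) := rfl
    have hv1 : v 1 = Polynomial.X := rfl
    have hv : ∀ i, v i ∈ Ideal.span {(Polynomial.X : Polynomial k)} := by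
      intro i
      fin_cases i
      · rw [show v ⟨0, by omega⟩ = v 0 from rfl, hv0, Ideal.mem_span_singleton]
        exact Dvd.dvd.mul_left (dvd_pow_self _ (by omega)) _
      · rw [show v ⟨1, by omega⟩ = v 1 from rfl, hv1]
        exact Ideal.mem_span_singleton_self _
    have hg0 : jetHom v hv (n-1) (xx k ^ 2 * yy k + yy k ^ (n-1)) = 0 := by
      rw [jetHom_g_eval v hv n hn]
      have hexp : v 0 ^ 2 * v 1 + v 1 ^ (n-1) = 0 := by
        rw [hv0, hv1, mul_pow, ← map_pow, hz, ← pow_mul]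
        rw [show (n-2)/2 * 2 = n - 2 by omega]
        rw [map_neg, map_one]
        have hXX : (Polynomial.X : Polynomial k) ^ (n-2) * Polynomial.X
            = Polynomial.X ^ (n-1) := by
          rw [← pow_succ]
          congr 1
          omega
        rw [neg_one_mul, neg_mul, hXX, neg_add_cancel]
      rw [hexp, map_zero]
    refine ⟨{ A := k, φ := jetHom v hv (n-1),
              ker_I := ker_I_of_g_zero _ hg0,
              max_to_t := fun f hf => jetHom_maxToT v hv (n-1) f hf }, ?_⟩
    intro c hc
    show c = 0
    rw [jetHom_C_mul v hv (n-1) c _, jetHom_yn_eval v hv n hn, hv1, ← map_mul] at hc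
    apply jetTrunc_C_X_pow_eq_zero (B := k) (m := n-1) (d := n-1) (le_refl (n-1))
    rw [show Polynomial.C c = Polynomial.C (algebraMap k k c) from rfl]
    exact hc
  · -- odd case : A = k[u]/(u^n), x ↦ u^((n-1)/2) t^((n-3)/2), y ↦ u t - t²
    have ho2 : n % 2 = 1 := Nat.odd_iff.mp ho
    set A2 : Type := JetTrunc k (n-1) with hA2
    letI : CommRing A2 := inferInstanceAs (CommRing (JetTrunc k (n-1)))
    letI : Algebra k A2 := inferInstanceAs (Algebra k (JetTrunc k (n-1)))
    set u : A2 := jetT k (n-1) with hu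
    have hun : u ^ n = 0 := by
      rw [hu, jetT, ← map_pow]
      apply Ideal.Quotient.eq_zero_iff_mem.mpr
      exact Ideal.mem_span_singleton.mpr (pow_dvd_pow _ (by omega))
    set v : Fin 2 → Polynomial A2 :=
      ![Polynomial.C (u ^ ((n-1)/2)) * Polynomial.X ^ ((n-3)/2),
        Polynomial.C u * Polynomial.X - Polynomial.X ^ 2] with hvdef
    have hv0 : v 0 = Polynomial.C (u ^ ((n-1)/2)) * Polynomial.X ^ ((n-3)/2) := rfl
    have hv1 : v 1 = Polynomial.C u * Polynomial.X - Polynomial.X ^ 2 := rfl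
    have hv : ∀ i, v i ∈ Ideal.span {(Polynomial.X : Polynomial A2)} := by
      intro i
      fin_cases i
      · rw [show v ⟨0, by omega⟩ = v 0 from rfl, hv0, Ideal.mem_span_singleton]
        exact Dvd.dvd.mul_left (dvd_pow_self _ (by omega)) _
      · rw [show v ⟨1, by omega⟩ = v 1 from rfl, hv1, Ideal.mem_span_singleton]
        exact dvd_sub (Dvd.dvd.mul_left dvd_rfl _) (dvd_pow_self _ (by omega))
    -- key polynomial computations
    obtain ⟨w, hw⟩ : ∃ w, (Polynomial.C u - Polynomial.X) ^ (n-1)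
        = Polynomial.C (u ^ (n-1)) + Polynomial.X * w := by
      have hdvd : Polynomial.X ∣ ((Polynomial.C u - Polynomial.X) ^ (n-1)
          - Polynomial.C (u ^ (n-1))) := by
        rw [Polynomial.X_dvd_iff, Polynomial.coeff_sub,
          Polynomial.coeff_zero_eq_eval_zero, Polynomial.coeff_zero_eq_eval_zero]
        simp
      obtain ⟨w, hw⟩ := hdvd
      exact ⟨w, by rw [← hw]; ring⟩
    have hv1pow : v 1 ^ (n-1) = Polynomial.C (u ^ (n-1)) * Polynomial.X ^ (n-1)
        + Polynomial.X ^ n * w := by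
      have : v 1 = Polynomial.X * (Polynomial.C u - Polynomial.X) := by
        rw [hv1]; ring
      have hXn : (Polynomial.X : Polynomial A2) ^ (n-1) * Polynomial.X
          = Polynomial.X ^ n := by
        rw [← pow_succ]; congr 1; omega
      calc v 1 ^ (n-1) = (Polynomial.X * (Polynomial.C u - Polynomial.X)) ^ (n-1) := by
            rw [this]
        _ = Polynomial.X ^ (n-1) * (Polynomial.C (u ^ (n-1)) + Polynomial.X * w) := by
            rw [mul_pow, hw]
        _ = Polynomial.C (u ^ (n-1)) * Polynomial.X ^ (n-1)
              + (Polynomial.X ^ (n-1) * Polynomial.X) * w := by ring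
        _ = Polynomial.C (u ^ (n-1)) * Polynomial.X ^ (n-1) + Polynomial.X ^ n * w := by
            rw [hXn]
    have hv0sq : v 0 ^ 2 * v 1 = - (Polynomial.C (u ^ (n-1)) * Polynomial.X ^ (n-1)) := by
      rw [hv0, hv1, mul_pow, ← map_pow, ← pow_mul, ← pow_mul]
      rw [show (n-1)/2 * 2 = n - 1 by omega, show (n-3)/2 * 2 = n - 3 by omega]
      rw [mul_sub]
      have e1 : Polynomial.C (u ^ (n-1)) * Polynomial.X ^ (n-3)
          * (Polynomial.C u * Polynomial.X) = Polynomial.C (u ^ n) * Polynomial.X ^ (n-2) := by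
        have h1 : u ^ (n-1) * u = u ^ n := by
          rw [← pow_succ]; congr 1; omega
        have h2 : (Polynomial.X : Polynomial A2) ^ (n-3) * Polynomial.X
            = Polynomial.X ^ (n-2) := by
          rw [← pow_succ]; congr 1; omega
        rw [← h1, ← h2, map_mul]
        ring
      have e2 : Polynomial.C (u ^ (n-1)) * Polynomial.X ^ (n-3) * Polynomial.X ^ 2
          = Polynomial.C (u ^ (n-1)) * Polynomial.X ^ (n-1) := by
        rw [mul_assoc, ← pow_add, show (n-3) + 2 = n - 1 by omega]
      rw [e1, e2, hun, map_zero, zero_mul, zero_sub]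
    have hg0 : jetHom v hv (n-1) (xx k ^ 2 * yy k + yy k ^ (n-1)) = 0 := by
      rw [jetHom_g_eval v hv n hn, hv0sq, hv1pow]
      have : - (Polynomial.C (u ^ (n-1)) * Polynomial.X ^ (n-1))
          + (Polynomial.C (u ^ (n-1)) * Polynomial.X ^ (n-1) + Polynomial.X ^ n * w)
          = Polynomial.X ^ n * w := by ring
      rw [this]
      apply Ideal.Quotient.eq_zero_iff_mem.mpr
      apply Ideal.mul_mem_right
      exact Ideal.mem_span_singleton.mpr (pow_dvd_pow _ (by omega))
    refine ⟨{ A := A2, φ := jetHom v hv (n-1),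
              ker_I := ker_I_of_g_zero _ hg0,
              max_to_t := fun f hf => jetHom_maxToT v hv (n-1) f hf }, ?_⟩
    intro c hc
    show c = 0
    rw [jetHom_C_mul v hv (n-1) c _, jetHom_yn_eval v hv n hn, hv1pow] at hc
    have hyq : Ideal.Quotient.mk
        (Ideal.span {(Polynomial.X : Polynomial A2) ^ ((n-1)+1)})
        (Polynomial.C (u ^ (n-1)) * Polynomial.X ^ (n-1) + Polynomial.X ^ n * w)
        = Ideal.Quotient.mk _ (Polynomial.C (u ^ (n-1)) * Polynomial.X ^ (n-1)) := by
      rw [map_add]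
      have : Ideal.Quotient.mk
          (Ideal.span {(Polynomial.X : Polynomial A2) ^ ((n-1)+1)})
          (Polynomial.X ^ n * w) = 0 := by
        apply Ideal.Quotient.eq_zero_iff_mem.mpr
        apply Ideal.mul_mem_right
        exact Ideal.mem_span_singleton.mpr (pow_dvd_pow _ (by omega))
      rw [this, add_zero]
    rw [hyq, ← map_mul] at hc
    have step1 : algebraMap k A2 c * u ^ (n-1) = 0 := by
      apply jetTrunc_C_X_pow_eq_zero (le_refl (n-1))
      have : Polynomial.C (algebraMap k A2 c)
          * (Polynomial.C (u ^ (n-1)) * Polynomial.X ^ (n-1))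
          = Polynomial.C (algebraMap k A2 c * u ^ (n-1)) * Polynomial.X ^ (n-1) := by
        rw [map_mul]; ring
      rw [← this]
      exact hc
    have step2 : algebraMap k A2 c * u ^ (n-1)
        = Ideal.Quotient.mk (Ideal.span {(Polynomial.X : Polynomial k) ^ ((n-1)+1)})
          (Polynomial.C c * Polynomial.X ^ (n-1)) := by
      rw [map_mul, hu, jetT, ← map_pow]
      rfl
    rw [step2] at step1
    exact jetTrunc_C_X_pow_eq_zero (le_refl (n-1)) step1

end T2main

end JetDn

/-- for the `D_n` singularity `I = (x^2 y + y^(n-1))` in `k[[x, y]]`,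
the `m`-th jet closure of `I` is `I + 𝔪^(m+1)` for all `m ≤ n - 1`. -/
theorem jetClosure_Dn (k : Type) [Field k] [IsAlgClosed k] [CharZero k]
    (n : ℕ) (hn : 4 ≤ n) (m : ℕ) (hm : m ≤ n - 1) :
    jetClosure k (mIdeal k 2) m (Ideal.span {xx k ^ 2 * yy k + yy k ^ (n - 1)}) =
      Ideal.span {xx k ^ 2 * yy k + yy k ^ (n - 1)} ⊔ (mIdeal k 2) ^ (m + 1) := by
  apply le_antisymm
  · intro f hf
    rw [jetClosure] at hf
    have hf1 : f ∈ RingHom.ker (JetDn.T1 k n m).φ :=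
      Submodule.mem_sInf.mp hf _ ⟨JetDn.T1 k n m, rfl⟩
    have hker1 : JetDn.jetHom (JetDn.v1 k n) (JetDn.hv1 n) m f = 0 :=
      RingHom.mem_ker.mp hf1
    obtain ⟨c, hc⟩ := JetDn.T1_decomp n m (by omega) f hker1
    by_cases hcase : m = n - 1
    · subst hcase
      obtain ⟨T2, hT2⟩ := JetDn.exists_T2 (k := k) n hn
      have hf2 : T2.φ f = 0 :=
        RingHom.mem_ker.mp (Submodule.mem_sInf.mp hf _ ⟨T2, rfl⟩)
      have hK : Ideal.span {xx k ^ 2 * yy k + yy k ^ (n - 1)} ⊔ (mIdeal k 2) ^ ((n-1) + 1)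
          ≤ RingHom.ker T2.φ := by
        apply sup_le
        · intro x hx
          exact RingHom.mem_ker.mpr (T2.ker_I x hx)
        · intro x hx
          exact RingHom.mem_ker.mpr (JetDn.jetTest_ker_pow T2 hx)
      have h3 : T2.φ (f - MvPowerSeries.C (σ := Fin 2) (R := k) c * yy k ^ (n-1)) = 0 :=
        RingHom.mem_ker.mp (hK hc)
      rw [map_sub, hf2, zero_sub, neg_eq_zero] at h3
      have hc0 : c = 0 := hT2 c h3
      rw [hc0] at hc
      simpa using hc
    · have hmem : MvPowerSeries.C (σ := Fin 2) (R := k) c * yy k ^ (n-1) ∈ (mIdeal k 2) ^ (m+1) := by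
        have h2 : yy k ^ (n-1) ∈ (mIdeal k 2) ^ (n-1) := Ideal.pow_mem_pow JetDn.yy_mem_m _
        exact Ideal.pow_le_pow_right (by omega) (Ideal.mul_mem_left _ _ h2)
      have h4 := Ideal.add_mem _ hc (Ideal.mem_sup_right hmem)
      simpa using h4
  · exact JetDn.le_jetClosure
end

section
/- Let R = k[[x_1, ..., x_n]] and I ⊆ R a monomial ideal generated by square-free monomials. Then I^{m-jsc} = I + m^{m+1} for every m, and consequently also I^{m-jc} = I + m^{m+1}. -/
open Polynomial

/-- A test datum for the `m`-th jet support closure: like a jet closure test,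
but with the coefficient `k`-algebra `A` required to be reduced (functor-of-points
description of maps from `(R_m/(I_m + 𝔪^e))_red`). -/
structure JetSupportTest (k : Type) [CommRing k] {R : Type} [CommRing R] [Algebra k R]
    (𝔪 : Ideal R) (m : ℕ) (I : Ideal R) where
  A : Type
  [instCommRing : CommRing A]
  [instReduced : IsReduced A]
  [instAlgebra : Algebra k A]
  φ : R →ₐ[k] JetTrunc A m
  ker_I : ∀ f ∈ I, φ f = 0
  max_to_t : ∀ f ∈ 𝔪, φ f ∈ Ideal.span {jetT A m}

attribute [instance] JetSupportTest.instCommRing JetSupportTest.instReduced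
  JetSupportTest.instAlgebra

/-- The `m`-th jet support closure `I^{m-jsc}` of an ideal `I` in a local `k`-algebra
`(R, 𝔪)`. -/
noncomputable def jetSupportClosure (k : Type) [CommRing k] {R : Type} [CommRing R]
    [Algebra k R] (𝔪 : Ideal R) (m : ℕ) (I : Ideal R) : Ideal R :=
  sInf { J : Ideal R | ∃ T : JetSupportTest k 𝔪 m I, J = RingHom.ker T.φ }

noncomputable section JetAux

open MvPowerSeries

variable {σ : Type} [Fintype σ] [DecidableEq σ] {k : Type} [CommRing k]

set_option linter.unusedSectionVars false

/-- Truncation of a multivariate power series keeping coefficients with exponent `≤ D`. -/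
noncomputable def truncLe (D : σ →₀ ℕ) (f : MvPowerSeries σ k) : MvPolynomial σ k :=
  ∑ e ∈ Finset.Iic D, MvPolynomial.monomial e (coeff e f)

theorem coeff_truncLe (D e : σ →₀ ℕ) (f : MvPowerSeries σ k) :
    (truncLe D f).coeff e = if e ≤ D then coeff e f else 0 := by
  simp [truncLe, MvPolynomial.coeff_sum, MvPolynomial.coeff_monomial, Finset.mem_Iic]

theorem truncLe_add (D : σ →₀ ℕ) (f g : MvPowerSeries σ k) :
    truncLe D (f + g) = truncLe D f + truncLe D g := by
  apply MvPolynomial.ext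
  intro e
  simp only [coeff_truncLe, MvPolynomial.coeff_add, map_add]
  split_ifs <;> simp

theorem truncLe_zero (D : σ →₀ ℕ) : truncLe D (0 : MvPowerSeries σ k) = 0 := by
  apply MvPolynomial.ext; intro e; simp [coeff_truncLe]

theorem truncLe_one (D : σ →₀ ℕ) : truncLe D (1 : MvPowerSeries σ k) = 1 := by
  apply MvPolynomial.ext
  intro e
  rw [coeff_truncLe, MvPowerSeries.coeff_one, MvPolynomial.coeff_one]
  by_cases h0 : e = 0
  · subst h0; rw [if_pos (zero_le : 0 ≤ D), if_pos rfl]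
  · rw [if_neg h0, if_neg (fun h : (0 : σ →₀ ℕ) = e => h0 h.symm)]
    split_ifs <;> rfl

theorem truncLe_C (D : σ →₀ ℕ) (a : k) :
    truncLe D (MvPowerSeries.C a) = MvPolynomial.C a := by
  apply MvPolynomial.ext
  intro e
  rw [coeff_truncLe, MvPowerSeries.coeff_C, MvPolynomial.coeff_C]
  by_cases h0 : e = 0
  · subst h0; rw [if_pos (zero_le : 0 ≤ D), if_pos rfl]
  · rw [if_neg h0, if_neg (fun h : (0 : σ →₀ ℕ) = e => h0 h.symm)]
    split_ifs <;> rfl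

theorem truncLe_monomial (D d : σ →₀ ℕ) (r : k) :
    truncLe D (MvPowerSeries.monomial d r) =
      if d ≤ D then MvPolynomial.monomial d r else 0 := by
  apply MvPolynomial.ext
  intro e
  rw [coeff_truncLe, MvPowerSeries.coeff_monomial]
  by_cases hed : e = d
  · subst hed
    by_cases h2 : e ≤ D
    · rw [if_pos h2, if_pos rfl, if_pos h2, MvPolynomial.coeff_monomial, if_pos rfl]
    · rw [if_neg h2, if_neg h2, MvPolynomial.coeff_zero]
  · have hrhs : ((if d ≤ D then (MvPolynomial.monomial d) r else 0) : MvPolynomial σ k).coeff e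
        = 0 := by
      split_ifs
      · rw [MvPolynomial.coeff_monomial, if_neg (fun h => hed h.symm)]
      · rw [MvPolynomial.coeff_zero]
    rw [hrhs]
    split_ifs <;> rfl

variable {B : Type} [CommRing B] [Algebra k B] (c : σ → B) (D : σ →₀ ℕ)
  (hc : ∀ i, c i ^ (D i + 1) = 0)

include hc

theorem prod_pow_eq_zero_of_not_le {d : σ →₀ ℕ} (hd : ¬ d ≤ D) :
    (∏ i ∈ d.support, c i ^ d i) = 0 := by
  rw [Finsupp.le_def] at hd
  push_neg at hd
  obtain ⟨i, hi⟩ := hd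
  apply Finset.prod_eq_zero (i := i)
  · exact Finsupp.mem_support_iff.2 (by omega)
  · have h : D i + 1 + (d i - (D i + 1)) = d i := by omega
    rw [← h, pow_add, hc i, zero_mul]

theorem aeval_eq_zero_of_unsupported (p : MvPolynomial σ k)
    (hp : ∀ e ∈ p.support, ¬ e ≤ D) : MvPolynomial.aeval c p = 0 := by
  conv_lhs => rw [p.as_sum]
  rw [map_sum]
  apply Finset.sum_eq_zero
  intro e he
  rw [MvPolynomial.aeval_monomial]
  have h2 : (e.prod fun i k => c i ^ k) = ∏ i ∈ e.support, c i ^ e i := rfl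
  rw [h2, prod_pow_eq_zero_of_not_le c D hc (hp e he), mul_zero]

theorem truncLe_aeval_mul (f g : MvPowerSeries σ k) :
    MvPolynomial.aeval c (truncLe D (f * g)) =
      MvPolynomial.aeval c (truncLe D f) * MvPolynomial.aeval c (truncLe D g) := by
  have key : MvPolynomial.aeval c (truncLe D (f * g) - truncLe D f * truncLe D g) = 0 := by
    apply aeval_eq_zero_of_unsupported c D hc
    intro e he hle
    apply MvPolynomial.mem_support_iff.1 he
    rw [MvPolynomial.coeff_sub, sub_eq_zero, coeff_truncLe, if_pos hle,
      MvPolynomial.coeff_mul, MvPowerSeries.coeff_mul]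
    apply Finset.sum_congr rfl
    intro uv huv
    rw [Finset.HasAntidiagonal.mem_antidiagonal] at huv
    have hu : uv.1 ≤ D := le_trans (huv ▸ le_self_add) hle
    have hv : uv.2 ≤ D := le_trans (huv ▸ le_add_self) hle
    rw [coeff_truncLe, coeff_truncLe, if_pos hu, if_pos hv]
  rw [map_sub, map_mul, sub_eq_zero] at key
  exact key

/-- Evaluation of a power series at jointly nilpotent points, as an algebra hom. -/
noncomputable def truncAeval : MvPowerSeries σ k →ₐ[k] B where
  toFun f := MvPolynomial.aeval c (truncLe D f)
  map_one' := by show MvPolynomial.aeval c (truncLe D 1) = 1; rw [truncLe_one, map_one]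
  map_mul' f g := truncLe_aeval_mul c D hc f g
  map_zero' := by
    show MvPolynomial.aeval c (truncLe D 0) = 0
    rw [truncLe_zero, map_zero]
  map_add' f g := by
    show MvPolynomial.aeval c (truncLe D (f + g)) = _
    rw [truncLe_add, map_add]
  commutes' r := by
    show MvPolynomial.aeval c (truncLe D (algebraMap k (MvPowerSeries σ k) r)) = _
    rw [← MvPowerSeries.c_eq_algebraMap, truncLe_C, MvPolynomial.aeval_C]

theorem truncAeval_apply (f : MvPowerSeries σ k) :
    truncAeval c D hc f = MvPolynomial.aeval c (truncLe D f) := rfl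

theorem truncAeval_monomial (d : σ →₀ ℕ) (r : k) :
    truncAeval c D hc (MvPowerSeries.monomial d r) =
      algebraMap k B r * ∏ i ∈ d.support, c i ^ d i := by
  rw [truncAeval_apply, truncLe_monomial]
  split_ifs with h
  · rw [MvPolynomial.aeval_monomial]; rfl
  · rw [map_zero, prod_pow_eq_zero_of_not_le c D hc h, mul_zero]

end JetAux


namespace JetAux2

open MvPowerSeries

variable {k : Type} [Field k] {n : ℕ}

theorem X_mem_mIdeal (i : Fin n) : (X i : MvPowerSeries (Fin n) k) ∈ mIdeal k n := by
  simp [mIdeal, RingHom.mem_ker, constantCoeff_X]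

theorem monomial_mem_pow (d : Fin n →₀ ℕ) :
    (monomial d 1 : MvPowerSeries (Fin n) k) ∈ (mIdeal k n) ^ (∑ i, d i) := by
  induction d using Finsupp.induction with
  | zero => simp
  | single_add a b d' ha hb ih =>
    have hsum : ∑ i, (Finsupp.single a b + d') i = b + ∑ i, d' i := by
      simp [Finsupp.add_apply, Finset.sum_add_distrib, Finsupp.single_apply]
    rw [hsum, pow_add]
    have hmono : (monomial (Finsupp.single a b + d') 1 : MvPowerSeries (Fin n) k)
        = (X a) ^ b * monomial d' 1 := by
      rw [X_pow_eq, MvPowerSeries.monomial_mul_monomial, one_mul]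
    rw [hmono]
    exact Ideal.mul_mem_mul (Ideal.pow_mem_pow (X_mem_mIdeal a) b) ih

theorem exists_le_sum_eq (N : ℕ) (e : Fin n →₀ ℕ) (h : N ≤ ∑ i, e i) :
    ∃ d : Fin n →₀ ℕ, d ≤ e ∧ ∑ i, d i = N := by
  induction N with
  | zero => exact ⟨0, (zero_le : 0 ≤ e), by simp⟩
  | succ N ih =>
    obtain ⟨d, hd, hsum⟩ := ih (by omega)
    have hex : ∃ i, d i < e i := by
      by_contra hco
      push_neg at hco
      have : ∑ i, e i ≤ ∑ i, d i := Finset.sum_le_sum (fun i _ => hco i)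
      omega
    obtain ⟨i, hi⟩ := hex
    refine ⟨d + Finsupp.single i 1, ?_, ?_⟩
    · rw [Finsupp.le_def]
      intro j
      rw [Finsupp.add_apply, Finsupp.single_apply]
      rcases eq_or_ne i j with rfl | hij
      · simpa using hi
      · rw [if_neg hij]
        simpa using Finsupp.le_def.1 hd j
    · simp [Finsupp.add_apply, Finset.sum_add_distrib, Finsupp.single_apply, hsum]

theorem mem_pow_of_coeff_eq_zero (m : ℕ) (f : MvPowerSeries (Fin n) k)
    (hv : ∀ e : Fin n →₀ ℕ, (∑ i, e i) ≤ m → coeff e f = 0) :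
    f ∈ (mIdeal k n) ^ (m + 1) := by
  classical
  set N := m + 1 with hN
  have hchi : ∀ e : Fin n →₀ ℕ, N ≤ ∑ i, e i → ∃ d : Fin n →₀ ℕ, d ≤ e ∧ ∑ i, d i = N :=
    fun e h => exists_le_sum_eq N e h
  choose χfun hχle hχsum using hchi
  set χ : (Fin n →₀ ℕ) → (Fin n →₀ ℕ) := fun e =>
    if h : N ≤ ∑ i, e i then χfun e h else 0 with hχ
  set T : Finset (Fin n →₀ ℕ) :=
    (Finset.Iic (Finsupp.equivFunOnFinite.symm fun _ => N)).filter (fun d => ∑ i, d i = N)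
      with hT
  have hmemT : ∀ d : Fin n →₀ ℕ, (∑ i, d i = N) → d ∈ T := by
    intro d hd
    rw [hT, Finset.mem_filter, Finset.mem_Iic]
    refine ⟨Finsupp.le_def.2 fun j => ?_, hd⟩
    show d j ≤ N
    rw [← hd]
    exact Finset.single_le_sum (f := fun i => d i) (fun _ _ => Nat.zero_le _)
      (Finset.mem_univ j)
  set g : (Fin n →₀ ℕ) → MvPowerSeries (Fin n) k := fun d e' =>
    if χ (e' + d) = d then coeff (e' + d) f else 0 with hg
  have hgcoeff : ∀ d e', coeff e' (g d) = if χ (e' + d) = d then coeff (e' + d) f else 0 :=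
    fun d e' => rfl
  have hF : f = ∑ d ∈ T, monomial d 1 * g d := by
    apply MvPowerSeries.ext
    intro e
    rw [map_sum]
    by_cases he : N ≤ ∑ i, e i
    · have hst : χ e = χfun e he := by rw [hχ]; exact dif_pos he
      have hle : χ e ≤ e := hst ▸ hχle e he
      have hsum : ∑ i, χ e i = N := by rw [hst]; exact hχsum e he
      rw [Finset.sum_eq_single (χ e)]
      · rw [MvPowerSeries.coeff_monomial_mul, if_pos hle, hgcoeff, tsub_add_cancel_of_le hle, if_pos rfl,
          one_mul]
      · intro d hd hne
        rw [MvPowerSeries.coeff_monomial_mul]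
        split_ifs with hdle
        · rw [hgcoeff, tsub_add_cancel_of_le hdle, if_neg (fun hh => hne (by rw [← hh])),
            mul_zero]
        · rfl
      · intro habs
        exact absurd (hmemT (χ e) hsum) habs
    · rw [hv e (by omega)]
      symm
      apply Finset.sum_eq_zero
      intro d hd
      rw [hT, Finset.mem_filter] at hd
      rw [MvPowerSeries.coeff_monomial_mul, if_neg]
      intro hdle
      have : ∑ i, d i ≤ ∑ i, e i := Finset.sum_le_sum (fun i _ => Finsupp.le_def.1 hdle i)
      omega
  rw [hF]
  apply Ideal.sum_mem
  intro d hd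
  rw [hT, Finset.mem_filter] at hd
  apply Ideal.mul_mem_right
  have := monomial_mem_pow (k := k) d
  rwa [hd.2] at this

theorem mem_sup_of_monomials (m : ℕ) (I : Ideal (MvPowerSeries (Fin n) k))
    (f : MvPowerSeries (Fin n) k)
    (hmono : ∀ d : Fin n →₀ ℕ, (∑ i, d i) ≤ m → coeff d f ≠ 0 → monomial d 1 ∈ I) :
    f ∈ I ⊔ (mIdeal k n) ^ (m + 1) := by
  classical
  set Tm : Finset (Fin n →₀ ℕ) :=
    (Finset.Iic (Finsupp.equivFunOnFinite.symm fun _ => m)).filter (fun d => ∑ i, d i ≤ m)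
      with hTm
  set flow : MvPowerSeries (Fin n) k := ∑ d ∈ Tm, monomial d (coeff d f) with hflow
  have h1 : flow ∈ I := by
    apply Ideal.sum_mem
    intro d hd
    rw [hTm, Finset.mem_filter] at hd
    by_cases hc : coeff d f = 0
    · rw [hc, map_zero]; exact Ideal.zero_mem I
    · have heq : (monomial d (coeff d f) : MvPowerSeries (Fin n) k)
          = MvPowerSeries.C (coeff d f) * monomial d 1 := by
        rw [← MvPowerSeries.monomial_zero_eq_C_apply, MvPowerSeries.monomial_mul_monomial,
          zero_add, mul_one]
      rw [heq]
      exact Ideal.mul_mem_left I _ (hmono d hd.2 hc)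
  have h2 : f - flow ∈ (mIdeal k n) ^ (m + 1) := by
    apply mem_pow_of_coeff_eq_zero
    intro e he
    have hmem : e ∈ Tm := by
      rw [hTm, Finset.mem_filter, Finset.mem_Iic]
      refine ⟨Finsupp.le_def.2 fun j => ?_, he⟩
      show e j ≤ m
      exact le_trans (Finset.single_le_sum (f := fun i => e i) (fun _ _ => Nat.zero_le _)
        (Finset.mem_univ j)) he
    have hcoeff : coeff e flow = coeff e f := by
      rw [hflow, map_sum, Finset.sum_eq_single e]
      · rw [MvPowerSeries.coeff_monomial, if_pos rfl]
      · intro d hd hne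
        rw [MvPowerSeries.coeff_monomial, if_neg (fun hh => hne hh.symm)]
      · intro habs
        exact absurd hmem habs
    rw [map_sub, hcoeff, sub_self]
  have := Submodule.add_mem _ (Submodule.mem_sup_left h1) (Submodule.mem_sup_right h2)
  simpa using this

end JetAux2


noncomputable section JetAux3

namespace JetAux3

open MvPowerSeries

variable {k : Type} [Field k] {n : ℕ}

/-- The generic coefficients: `X i` for `i` in the support of `d0`, and `0` otherwise. -/
noncomputable def lamF (k : Type) [Field k] (n : ℕ) (d0 : Fin n →₀ ℕ) :
    Fin n → MvPolynomial (Fin n) k :=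
  fun i => if d0 i ≠ 0 then MvPolynomial.X i else 0

/-- The generic arc coordinates in the truncated polynomial ring. -/
noncomputable def cF (m : ℕ) (d0 : Fin n →₀ ℕ) :
    Fin n → JetTrunc (MvPolynomial (Fin n) k) m :=
  fun i => Ideal.Quotient.mk _ (Polynomial.C (lamF k n d0 i) * Polynomial.X)

noncomputable def DF (n m : ℕ) : Fin n →₀ ℕ := Finsupp.equivFunOnFinite.symm (fun _ => m)

theorem DF_apply (n m : ℕ) (i : Fin n) : DF n m i = m := rfl

theorem cF_pow (m : ℕ) (d0 : Fin n →₀ ℕ) (i : Fin n) :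
    cF (k := k) m d0 i ^ (DF n m i + 1) = 0 := by
  rw [DF_apply, cF, ← map_pow, mul_pow, Ideal.Quotient.eq_zero_iff_mem]
  exact Ideal.mul_mem_left _ _ (Ideal.subset_span rfl)

/-- The test homomorphism. -/
noncomputable def phiF (m : ℕ) (d0 : Fin n →₀ ℕ) :
    MvPowerSeries (Fin n) k →ₐ[k] JetTrunc (MvPolynomial (Fin n) k) m :=
  truncAeval (cF m d0) (DF n m) (cF_pow m d0)

/-- Evaluation at `t = 0`, as a `k`-algebra homomorphism on the truncated polynomial ring. -/
noncomputable def epsF (A : Type) [CommRing A] [Algebra k A] (m : ℕ) :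
    JetTrunc A m →ₐ[k] A :=
  { Ideal.Quotient.lift _ (Polynomial.evalRingHom (0 : A)) (by
      intro p hp
      rw [Ideal.mem_span_singleton] at hp
      obtain ⟨q, rfl⟩ := hp
      simp) with
    commutes' := by
      intro r
      have h1 : algebraMap k (JetTrunc A m) r
          = Ideal.Quotient.mk _ (algebraMap k (Polynomial A) r) := rfl
      show Ideal.Quotient.lift _ (Polynomial.evalRingHom (0 : A)) _
          (algebraMap k (JetTrunc A m) r) = _
      rw [h1, Ideal.Quotient.lift_mk, Polynomial.algebraMap_apply]
      simp }

theorem epsF_mk (A : Type) [CommRing A] [Algebra k A] (m : ℕ) (p : Polynomial A) :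
    epsF (k := k) A m (Ideal.Quotient.mk _ p) = p.eval 0 := by
  show Ideal.Quotient.lift _ (Polynomial.evalRingHom (0 : A)) _ (Ideal.Quotient.mk _ p) = _
  rw [Ideal.Quotient.lift_mk]
  rfl

theorem mem_span_jetT_of_epsF_eq_zero (A : Type) [CommRing A] [Algebra k A] (m : ℕ)
    (z : JetTrunc A m) (hz : epsF (k := k) A m z = 0) :
    z ∈ Ideal.span {jetT A m} := by
  obtain ⟨p, rfl⟩ := Ideal.Quotient.mk_surjective z
  rw [epsF_mk, ← Polynomial.coeff_zero_eq_eval_zero] at hz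
  obtain ⟨q, rfl⟩ := Polynomial.X_dvd_iff.2 hz
  rw [map_mul]
  exact Ideal.mul_mem_right _ _ (Ideal.subset_span rfl)

theorem aeval_zero_eq (A : Type) [CommRing A] [Algebra k A] (q : MvPolynomial (Fin n) k) :
    MvPolynomial.aeval (fun _ : Fin n => (0 : A)) q
      = algebraMap k A (MvPolynomial.coeff 0 q) := by
  classical
  conv_lhs => rw [MvPolynomial.as_sum q]
  rw [map_sum]
  by_cases h0 : (0 : Fin n →₀ ℕ) ∈ q.support
  · rw [Finset.sum_eq_single (0 : Fin n →₀ ℕ)]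
    · rw [MvPolynomial.aeval_monomial]
      simp
    · intro d hd hne
      rw [MvPolynomial.aeval_monomial]
      have : (d.prod fun i e => (0 : A) ^ e) = 0 := by
        have hex : ∃ i, d i ≠ 0 := by
          by_contra hco
          push_neg at hco
          exact hne (Finsupp.ext fun i => hco i)
        obtain ⟨i, hi⟩ := hex
        exact Finset.prod_eq_zero (Finsupp.mem_support_iff.2 hi) (zero_pow hi)
      rw [this, mul_zero]
    · intro h; exact absurd h0 h
  · rw [MvPolynomial.notMem_support_iff.1 h0, map_zero, Finset.sum_eq_zero]
    intro d hd
    rw [MvPolynomial.aeval_monomial]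
    have hne : d ≠ 0 := fun h => h0 (h ▸ hd)
    have : (d.prod fun i e => (0 : A) ^ e) = 0 := by
      have hex : ∃ i, d i ≠ 0 := by
        by_contra hco
        push_neg at hco
        exact hne (Finsupp.ext fun i => hco i)
      obtain ⟨i, hi⟩ := hex
      exact Finset.prod_eq_zero (Finsupp.mem_support_iff.2 hi) (zero_pow hi)
    rw [this, mul_zero]

theorem epsF_phiF (m : ℕ) (d0 : Fin n →₀ ℕ) (f : MvPowerSeries (Fin n) k) :
    epsF (k := k) (MvPolynomial (Fin n) k) m (phiF (k := k) m d0 f)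
      = algebraMap k (MvPolynomial (Fin n) k) (constantCoeff f) := by
  rw [phiF, truncAeval_apply]
  have hcomp := MvPolynomial.comp_aeval (R := k) (cF (k := k) m d0)
    (epsF (k := k) (MvPolynomial (Fin n) k) m)
  have h2 := congrArg (fun (g : MvPolynomial (Fin n) k →ₐ[k] MvPolynomial (Fin n) k)
    => g (truncLe (DF n m) f)) hcomp
  simp only [AlgHom.comp_apply] at h2
  rw [h2]
  have hc0 : (fun i => epsF (k := k) (MvPolynomial (Fin n) k) m (cF (k := k) m d0 i))
      = fun _ : Fin n => (0 : MvPolynomial (Fin n) k) := by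
    funext i
    rw [cF, epsF_mk]
    simp
  rw [hc0, aeval_zero_eq]
  congr 1
  rw [coeff_truncLe, if_pos zero_le]
  rfl

theorem phiF_max_to_t (m : ℕ) (d0 : Fin n →₀ ℕ) (f : MvPowerSeries (Fin n) k)
    (hf : f ∈ mIdeal k n) :
    phiF (k := k) m d0 f ∈ Ideal.span {jetT (MvPolynomial (Fin n) k) m} := by
  apply mem_span_jetT_of_epsF_eq_zero (k := k)
  rw [epsF_phiF]
  have : constantCoeff f = 0 := hf
  rw [this, map_zero]

theorem phiF_ker {m : ℕ} {d0 : Fin n →₀ ℕ} {I : Ideal (MvPowerSeries (Fin n) k)}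
    {S : Set (Fin n →₀ ℕ)} (hS : ∀ d ∈ S, ∀ i, d i ≤ 1)
    (hI : I = Ideal.span ((fun d => MvPowerSeries.monomial d (1 : k)) '' S))
    (hd0I : MvPowerSeries.monomial d0 1 ∉ I) :
    ∀ f ∈ I, phiF (k := k) m d0 f = 0 := by
  have hle : I ≤ RingHom.ker (phiF (k := k) m d0) := by
    rw [hI, Ideal.span_le]
    rintro x ⟨e, heS, rfl⟩
    rw [SetLike.mem_coe, RingHom.mem_ker]
    have hcover : ∃ i, e i ≠ 0 ∧ d0 i = 0 := by
      by_contra hco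
      push_neg at hco
      have hled : e ≤ d0 := by
        rw [Finsupp.le_def]
        intro i
        by_cases hei : e i = 0
        · omega
        · have h1 := hS e heS i
          have h2 := hco i hei
          omega
      apply hd0I
      have : MvPowerSeries.monomial d0 (1 : k)
          = MvPowerSeries.monomial e 1 * MvPowerSeries.monomial (d0 - e) 1 := by
        rw [MvPowerSeries.monomial_mul_monomial, mul_one, add_tsub_cancel_of_le hled]
      rw [this]
      exact Ideal.mul_mem_right _ _ (hI ▸ Ideal.subset_span ⟨e, heS, rfl⟩)
    obtain ⟨i0, hi0e, hi0d⟩ := hcover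
    rw [phiF, truncAeval_monomial, map_one, one_mul]
    apply Finset.prod_eq_zero (Finsupp.mem_support_iff.2 hi0e)
    have hc0 : cF (k := k) m d0 i0 = 0 := by
      simp [cF, lamF, hi0d]
    rw [hc0, zero_pow hi0e]
  intro f hf
  exact RingHom.mem_ker.1 (hle hf)

theorem phiF_ne_zero {m : ℕ} {d0 : Fin n →₀ ℕ} (hd0sum : ∑ i, d0 i ≤ m)
    {f : MvPowerSeries (Fin n) k} (hf : coeff d0 f ≠ 0) :
    phiF (k := k) m d0 f ≠ 0 := by
  classical
  set A := MvPolynomial (Fin n) k with hA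
  set q : MvPolynomial (Fin n) k := truncLe (DF n m) f with hq
  set c' : Fin n → Polynomial A := fun i => Polynomial.C (lamF k n d0 i) * Polynomial.X
    with hc'
  set P : Polynomial A := MvPolynomial.aeval c' q with hP
  set j : ℕ := ∑ i, d0 i with hj
  set I0 : Ideal (Polynomial A) := Ideal.span {(Polynomial.X : Polynomial A) ^ (m + 1)}
    with hI0
  have hfactor : phiF (k := k) m d0 f = Ideal.Quotient.mkₐ k I0 P := by
    rw [phiF, truncAeval_apply, hP]
    have hcomp := MvPolynomial.comp_aeval (R := k) (B := JetTrunc A m) c' (Ideal.Quotient.mkₐ k I0)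
    have h2 := congrArg (fun (g : MvPolynomial (Fin n) k →ₐ[k] JetTrunc A m) => g q) hcomp
    simp only [AlgHom.comp_apply] at h2
    have hcc : (cF (k := k) m d0) = fun i => Ideal.Quotient.mkₐ k I0 (c' i) := rfl
    rw [hcc, ← h2]
  have hd0le : d0 ≤ DF n m := by
    rw [Finsupp.le_def]
    intro i
    rw [DF_apply]
    exact le_trans (Finset.single_le_sum (f := fun i => d0 i) (fun _ _ => Nat.zero_le _)
      (Finset.mem_univ i)) hd0sum
  have hd0q : MvPolynomial.coeff d0 q = coeff d0 f := by
    rw [hq, coeff_truncLe, if_pos hd0le]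
  -- compute the coefficient of `X^j` in `P`
  have hPc : P.coeff j = ∑ d ∈ q.support,
      (if (∑ i, d i) = j then
        MvPolynomial.C (MvPolynomial.coeff d q) * ∏ i ∈ d.support, lamF k n d0 i ^ d i
      else 0) := by
    conv_lhs => rw [hP, MvPolynomial.as_sum q]
    rw [map_sum, Polynomial.finset_sum_coeff]
    apply Finset.sum_congr rfl
    intro d hd
    rw [MvPolynomial.aeval_monomial]
    have hprod : (d.prod fun i e => c' i ^ e)
        = Polynomial.C (∏ i ∈ d.support, lamF k n d0 i ^ d i)
            * Polynomial.X ^ (∑ i ∈ d.support, d i) := by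
      show (∏ i ∈ d.support, c' i ^ d i) = _
      simp_rw [hc', mul_pow, ← Polynomial.C_pow]
      rw [Finset.prod_mul_distrib, Finset.prod_pow_eq_pow_sum, ← map_prod]
    have hsupp : ∑ i ∈ d.support, d i = ∑ i, d i :=
      Finset.sum_subset (Finset.subset_univ _)
        (fun i _ hi => Finsupp.notMem_support_iff.1 hi)
    rw [hprod, hsupp, Polynomial.algebraMap_apply, ← mul_assoc, ← Polynomial.C_mul,
      Polynomial.coeff_C_mul, Polynomial.coeff_X_pow]
    have halg : algebraMap k A (MvPolynomial.coeff d q) = MvPolynomial.C (MvPolynomial.coeff d q) := rfl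
    rw [halg]
    split_ifs with h1 h2 h2
    · rw [mul_one]
    · exact absurd h1.symm h2
    · exact absurd h2.symm h1
    · rw [mul_zero]
  have hkey : MvPolynomial.coeff d0 (P.coeff j) = coeff d0 f := by
    rw [hPc, MvPolynomial.coeff_sum]
    rw [Finset.sum_eq_single d0]
    · rw [if_pos rfl]
      have hlam : ∏ i ∈ d0.support, lamF k n d0 i ^ d0 i
          = ∏ i ∈ d0.support, MvPolynomial.X (R := k) i ^ d0 i :=
        Finset.prod_congr rfl (fun i hi => by
          rw [lamF, if_pos (Finsupp.mem_support_iff.1 hi)])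
      rw [hlam, MvPolynomial.prod_X_pow_eq_monomial, MvPolynomial.C_mul_monomial, mul_one,
        MvPolynomial.coeff_monomial, if_pos rfl, hd0q]
    · intro d hd hne
      split_ifs with hds
      · by_cases hcase : ∀ i ∈ d.support, d0 i ≠ 0
        · have hlam : ∏ i ∈ d.support, lamF k n d0 i ^ d i
              = ∏ i ∈ d.support, MvPolynomial.X (R := k) i ^ d i :=
            Finset.prod_congr rfl (fun i hi => by rw [lamF, if_pos (hcase i hi)])
          rw [hlam, MvPolynomial.prod_X_pow_eq_monomial, MvPolynomial.C_mul_monomial,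
            mul_one, MvPolynomial.coeff_monomial, if_neg hne]
        · push_neg at hcase
          obtain ⟨i, hi, hdi⟩ := hcase
          have hl0 : lamF k n d0 i = 0 := by simp [lamF, hdi]
          rw [Finset.prod_eq_zero hi
            (by rw [hl0]; exact zero_pow (Finsupp.mem_support_iff.1 hi)), mul_zero]
          rfl
      · rfl
    · intro hnotmem
      exact absurd (MvPolynomial.mem_support_iff.2 (by rw [hd0q]; exact hf)) hnotmem
  have hne : P.coeff j ≠ 0 := by
    intro h
    rw [h, MvPolynomial.coeff_zero] at hkey
    exact hf hkey.symm
  intro h0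
  rw [hfactor] at h0
  have hmem : P ∈ I0 := by
    rw [← Ideal.Quotient.eq_zero_iff_mem]
    rw [Ideal.Quotient.mkₐ_eq_mk] at h0
    exact h0
  rw [hI0, Ideal.mem_span_singleton] at hmem
  obtain ⟨h, hh⟩ := hmem
  apply hne
  rw [hh, mul_comm, Polynomial.coeff_mul_X_pow']
  rw [if_neg (by omega)]

end JetAux3

end JetAux3

/-- if `I ⊆ k[[x_1, ..., x_n]]` is a monomial ideal generated by square-free
monomials, then `I^{m-jsc} = I + 𝔪^(m+1)` for every `m`, and consequently also
`I^{m-jc} = I + 𝔪^(m+1)`. -/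
theorem jetSupportClosure_squarefree_monomial (k : Type) [Field k] [IsAlgClosed k]
    [CharZero k] (n : ℕ) (I : Ideal (MvPowerSeries (Fin n) k)) (S : Set (Fin n →₀ ℕ))
    (hS : ∀ d ∈ S, ∀ i, d i ≤ 1)
    (hI : I = Ideal.span ((fun d => MvPowerSeries.monomial (R := k) d (1 : k)) '' S)) (m : ℕ) :
    jetSupportClosure k (mIdeal k n) m I = I ⊔ (mIdeal k n) ^ (m + 1) ∧
      jetClosure k (mIdeal k n) m I = I ⊔ (mIdeal k n) ^ (m + 1) := by
  classical
  have hlow : ∀ (T : JetTest k (mIdeal k n) m I),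
      I ⊔ (mIdeal k n) ^ (m + 1) ≤ RingHom.ker T.φ := by
    intro T
    apply sup_le
    · intro f hf
      rw [RingHom.mem_ker]
      exact T.ker_I f hf
    · intro f hf
      rw [RingHom.mem_ker]
      have h1 : T.φ f ∈ Ideal.map T.φ ((mIdeal k n) ^ (m + 1)) := Ideal.mem_map_of_mem _ hf
      rw [Ideal.map_pow] at h1
      have h2 : Ideal.map T.φ (mIdeal k n) ≤ Ideal.span {jetT T.A m} := by
        rw [Ideal.map_le_iff_le_comap]
        intro g hg
        exact T.max_to_t g hg
      have h3 := Ideal.pow_right_mono h2 (m + 1) h1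
      rw [Ideal.span_singleton_pow] at h3
      have h4 : (jetT T.A m) ^ (m + 1) = 0 := by
        rw [jetT, ← map_pow, Ideal.Quotient.eq_zero_iff_mem]
        exact Ideal.subset_span rfl
      rw [h4] at h3
      have h5 : Ideal.span ({0} : Set (JetTrunc T.A m)) = ⊥ := Ideal.span_singleton_eq_bot.2 rfl
      rw [h5] at h3
      exact Ideal.mem_bot.1 h3
  have hjsc_le : jetSupportClosure k (mIdeal k n) m I ≤ I ⊔ (mIdeal k n) ^ (m + 1) := by
    intro f hf
    apply JetAux2.mem_sup_of_monomials
    intro d hdm hdc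
    by_contra hdI
    set T : JetSupportTest k (mIdeal k n) m I :=
      { A := MvPolynomial (Fin n) k
        φ := JetAux3.phiF (k := k) m d
        ker_I := JetAux3.phiF_ker hS hI hdI
        max_to_t := fun g hg => JetAux3.phiF_max_to_t m d g hg } with hT
    have hfker : f ∈ RingHom.ker T.φ := by
      have hle := sInf_le (a := RingHom.ker T.φ)
        (s := { J : Ideal (MvPowerSeries (Fin n) k) |
          ∃ T' : JetSupportTest k (mIdeal k n) m I, J = RingHom.ker T'.φ }) ⟨T, rfl⟩
      exact hle hf
    rw [RingHom.mem_ker] at hfker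
    exact JetAux3.phiF_ne_zero hdm hdc hfker
  have hle_jsc : I ⊔ (mIdeal k n) ^ (m + 1) ≤ jetSupportClosure k (mIdeal k n) m I := by
    apply le_sInf
    rintro J ⟨T, rfl⟩
    exact hlow { A := T.A, φ := T.φ, ker_I := T.ker_I, max_to_t := T.max_to_t }
  have hjsc : jetSupportClosure k (mIdeal k n) m I = I ⊔ (mIdeal k n) ^ (m + 1) :=
    le_antisymm hjsc_le hle_jsc
  have hjc_le : jetClosure k (mIdeal k n) m I ≤ jetSupportClosure k (mIdeal k n) m I := by
    apply le_sInf
    rintro J ⟨T, rfl⟩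
    exact sInf_le ⟨{ A := T.A, φ := T.φ, ker_I := T.ker_I, max_to_t := T.max_to_t }, rfl⟩
  have hle_jc : I ⊔ (mIdeal k n) ^ (m + 1) ≤ jetClosure k (mIdeal k n) m I := by
    apply le_sInf
    rintro J ⟨T, rfl⟩
    exact hlow T
  exact ⟨hjsc, le_antisymm (hjsc ▸ hjc_le) hle_jc⟩
end

section
/- Jet support closure is not additive: in R = k[[x, y]], with I = (x^2) and J = (y^2), one has I^{3-jsc} = (x^2, xy^2, y^4), J^{3-jsc} = (y^2, x^2 y, x^4), but (I + J)^{3-jsc} = (x^2, xy, y^2); in particular I^{3-jsc} + J^{3-jsc} ≠ (I + J)^{3-jsc} since xy ∈ (I+J)^{3-jsc} but xy ∉ I^{3-jsc} + J^{3-jsc}. -/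
open Polynomial

/-! ### Auxiliary development -/

namespace JSCaux

variable {k : Type} [Field k]

/-- The exponent `(i, j)` as a `Fin 2 →₀ ℕ`. -/
noncomputable def mexp (i j : ℕ) : Fin 2 →₀ ℕ := Finsupp.single 0 i + Finsupp.single 1 j

@[simp] lemma mexp_apply0 (i j : ℕ) : mexp i j 0 = i := by
  simp [mexp, Finsupp.single_apply]

@[simp] lemma mexp_apply1 (i j : ℕ) : mexp i j 1 = j := by
  simp [mexp, Finsupp.single_apply]

lemma mexp_eta (d : Fin 2 →₀ ℕ) : mexp (d 0) (d 1) = d := by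
  ext s; fin_cases s <;> simp

lemma mexp_le_iff {i j : ℕ} {d : Fin 2 →₀ ℕ} : mexp i j ≤ d ↔ i ≤ d 0 ∧ j ≤ d 1 := by
  constructor
  · intro h; exact ⟨by simpa using h 0, by simpa using h 1⟩
  · intro ⟨h1, h2⟩ s; fin_cases s <;> simpa

@[simp] lemma mexp_zero : mexp 0 0 = 0 := by ext s; fin_cases s <;> simp

lemma eq_zero_of_apply_eq_zero (d : Fin 2 →₀ ℕ) (h0 : d 0 = 0) (h1 : d 1 = 0) : d = 0 := by
  rw [← mexp_eta d, h0, h1, mexp_zero]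

/-- The index set: exponents `(i,j)` with `i, j < 4`. -/
noncomputable def DD : Finset (Fin 2 →₀ ℕ) :=
  (Finset.range 4 ×ˢ Finset.range 4).image fun p => mexp p.1 p.2

lemma mem_DD {d : Fin 2 →₀ ℕ} : d ∈ DD ↔ d 0 < 4 ∧ d 1 < 4 := by
  constructor
  · rintro hd
    simp only [DD, Finset.mem_image, Finset.mem_product, Finset.mem_range] at hd
    obtain ⟨p, ⟨h1, h2⟩, rfl⟩ := hd
    simpa using ⟨h1, h2⟩
  · intro ⟨h1, h2⟩
    simp only [DD, Finset.mem_image, Finset.mem_product, Finset.mem_range]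
    exact ⟨(d 0, d 1), ⟨h1, h2⟩, mexp_eta d⟩

lemma DD_dc {d e : Fin 2 →₀ ℕ} (hd : d ∈ DD) (he : e ≤ d) : e ∈ DD := by
  rw [mem_DD] at hd ⊢
  exact ⟨lt_of_le_of_lt (he 0) hd.1, lt_of_le_of_lt (he 1) hd.2⟩

lemma zero_mem_DD : (0 : Fin 2 →₀ ℕ) ∈ DD := by rw [mem_DD]; simp

variable {B : Type} [CommRing B] [Algebra k B]

/-- Evaluation of a power series in `k[[x,y]]` against a multiplicative weight
system `w` vanishing outside `DD`. -/
noncomputable def evalD (w : (Fin 2 →₀ ℕ) → B) (hw0 : w 0 = 1)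
    (hmul : ∀ d e, w d * w e = w (d + e)) (hout : ∀ d, d ∉ DD → w d = 0) :
    MvPowerSeries (Fin 2) k →ₐ[k] B where
  toFun f := ∑ d ∈ DD, MvPowerSeries.coeff (R := k) d f • w d
  map_one' := by
    show ∑ d ∈ DD, MvPowerSeries.coeff (R := k) d 1 • w d = 1
    rw [Finset.sum_eq_single (0 : Fin 2 →₀ ℕ)]
    · simp [hw0]
    · intro d _ hd0
      rw [MvPowerSeries.coeff_one, if_neg hd0, zero_smul]
    · intro h; exact absurd zero_mem_DD h
  map_mul' f g := by
    classical
    simp only [MvPowerSeries.coeff_mul, Finset.sum_smul, Finset.sum_mul, Finset.mul_sum]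
    rw [Finset.sum_sigma']
    have key : ∀ d ∈ DD, ∀ e ∈ DD,
        (MvPowerSeries.coeff (R := k) d f • w d) * (MvPowerSeries.coeff (R := k) e g • w e) =
          (MvPowerSeries.coeff (R := k) d f * MvPowerSeries.coeff (R := k) e g) • w (d + e) := by
      intro d _ e _
      rw [smul_mul_smul_comm, hmul]
    calc ∑ p ∈ DD.sigma fun d => Finset.HasAntidiagonal.antidiagonal d,
          (MvPowerSeries.coeff (R := k) p.2.1 f * MvPowerSeries.coeff (R := k) p.2.2 g) • w p.1
        = ∑ p ∈ (DD ×ˢ DD).filter (fun p => p.1 + p.2 ∈ DD),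
            (MvPowerSeries.coeff (R := k) p.1 f * MvPowerSeries.coeff (R := k) p.2 g) • w (p.1 + p.2) := by
          apply Finset.sum_nbij' (fun p => (p.2.1, p.2.2)) (fun p => ⟨p.1 + p.2, (p.1, p.2)⟩)
          · rintro ⟨d, p⟩ hp
            simp only [Finset.mem_sigma, Finset.HasAntidiagonal.mem_antidiagonal] at hp
            obtain ⟨hd, hpd⟩ := hp
            simp only [Finset.mem_filter, Finset.mem_product]
            refine ⟨⟨DD_dc hd ?_, DD_dc hd ?_⟩, by rwa [hpd]⟩
            · rw [← hpd]; exact le_self_add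
            · rw [← hpd]; exact le_add_self
          · rintro ⟨d, e⟩ hp
            simp only [Finset.mem_filter, Finset.mem_product] at hp
            simp only [Finset.mem_sigma, Finset.HasAntidiagonal.mem_antidiagonal]
            exact ⟨hp.2, by simp⟩
          · rintro ⟨d, p⟩ hp
            simp only [Finset.mem_sigma, Finset.HasAntidiagonal.mem_antidiagonal] at hp
            simp [hp.2]
          · rintro ⟨d, e⟩ _; rfl
          · rintro ⟨d, p⟩ hp
            simp only [Finset.mem_sigma, Finset.HasAntidiagonal.mem_antidiagonal] at hp
            rw [hp.2]
      _ = ∑ p ∈ DD ×ˢ DD,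
            (MvPowerSeries.coeff (R := k) p.1 f * MvPowerSeries.coeff (R := k) p.2 g) • w (p.1 + p.2) := by
          rw [Finset.sum_filter_of_ne]
          intro p _ hne
          by_contra hmem
          exact hne (by rw [hout _ hmem, smul_zero])
      _ = ∑ d ∈ DD, ∑ e ∈ DD,
            (MvPowerSeries.coeff (R := k) d f • w d) * (MvPowerSeries.coeff (R := k) e g • w e) := by
          rw [Finset.sum_product]
          exact Finset.sum_congr rfl fun d hd => Finset.sum_congr rfl fun e he =>
            (key d hd e he).symm
      _ = ∑ e ∈ DD, ∑ d ∈ DD,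
            (MvPowerSeries.coeff (R := k) d f • w d) * (MvPowerSeries.coeff (R := k) e g • w e) :=
          Finset.sum_comm
  map_zero' := by simp
  map_add' f g := by
    simp [add_smul, Finset.sum_add_distrib]
  commutes' c := by
    classical
    show ∑ d ∈ DD, MvPowerSeries.coeff (R := k) d (algebraMap k _ c) • w d = algebraMap k B c
    rw [Finset.sum_eq_single (0 : Fin 2 →₀ ℕ)]
    · simp [MvPowerSeries.algebraMap_apply, MvPowerSeries.coeff_C, hw0,
        Algebra.algebraMap_eq_smul_one]
    · intro d _ hd0
      simp [MvPowerSeries.algebraMap_apply, MvPowerSeries.coeff_C, hd0]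
    · intro h; exact absurd zero_mem_DD h

theorem evalD_apply (w : (Fin 2 →₀ ℕ) → B) (hw0) (hmul) (hout) (f : MvPowerSeries (Fin 2) k) :
    evalD w hw0 hmul hout f = ∑ d ∈ DD, MvPowerSeries.coeff (R := k) d f • w d := rfl

theorem evalD_monomial (w : (Fin 2 →₀ ℕ) → B) (hw0) (hmul) (hout) (i j : ℕ)
    (hij : mexp i j ∈ DD) :
    evalD w hw0 hmul hout (MvPowerSeries.monomial (R := k) (mexp i j) 1) = w (mexp i j) := by
  classical
  rw [evalD_apply, Finset.sum_eq_single (mexp i j)]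
  · rw [MvPowerSeries.coeff_monomial, if_pos rfl, one_smul]
  · intro d _ hd
    rw [MvPowerSeries.coeff_monomial, if_neg hd, zero_smul]
  · intro h; exact absurd hij h

lemma X_pow_mul_X_pow (i j : ℕ) :
    (MvPowerSeries.X 0 : MvPowerSeries (Fin 2) k) ^ i * MvPowerSeries.X 1 ^ j =
      MvPowerSeries.monomial (R := k) (mexp i j) 1 := by
  rw [MvPowerSeries.X_pow_eq, MvPowerSeries.X_pow_eq, MvPowerSeries.monomial_mul_monomial,
    one_mul, mexp]

lemma coeff_mexp_mul (i j : ℕ) (g : MvPowerSeries (Fin 2) k) (d : Fin 2 →₀ ℕ) :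
    MvPowerSeries.coeff (R := k) d (MvPowerSeries.monomial (R := k) (mexp i j) 1 * g) =
      if i ≤ d 0 ∧ j ≤ d 1 then MvPowerSeries.coeff (R := k) (d - mexp i j) g else 0 := by
  classical
  rw [MvPowerSeries.coeff_monomial_mul]
  by_cases h : mexp i j ≤ d
  · rw [if_pos h, if_pos (mexp_le_iff.mp h), one_mul]
  · rw [if_neg h, if_neg (fun hc => h (mexp_le_iff.mpr hc))]

lemma sub_mexp_apply0 (d : Fin 2 →₀ ℕ) (i j : ℕ) : (d - mexp i j) 0 = d 0 - i := by
  simp [Finsupp.tsub_apply]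

lemma sub_mexp_apply1 (d : Fin 2 →₀ ℕ) (i j : ℕ) : (d - mexp i j) 1 = d 1 - j := by
  simp [Finsupp.tsub_apply]

/-- Staircase decomposition (x-oriented): if the coefficients of `f` at `x^0 y^j` (`j < c`),
`x y^j` (`j < b`) vanish, then `f ∈ (x^2, x y^b, y^c)`. -/
lemma mem_span_stairX (b c : ℕ) (f : MvPowerSeries (Fin 2) k)
    (h0 : ∀ j : ℕ, j < c → MvPowerSeries.coeff (R := k) (mexp 0 j) f = 0)
    (h1 : ∀ j : ℕ, j < b → MvPowerSeries.coeff (R := k) (mexp 1 j) f = 0) :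
    f ∈ Ideal.span {(MvPowerSeries.monomial (R := k) (mexp 2 0) 1 : MvPowerSeries (Fin 2) k),
      MvPowerSeries.monomial (R := k) (mexp 1 b) 1, MvPowerSeries.monomial (R := k) (mexp 0 c) 1} := by
  classical
  set A : MvPowerSeries (Fin 2) k :=
    (fun e => MvPowerSeries.coeff (R := k) (mexp (e 0 + 2) (e 1)) f : (Fin 2 →₀ ℕ) → k) with hAdef
  set B : MvPowerSeries (Fin 2) k :=
    (fun e => if e 0 = 0 then MvPowerSeries.coeff (R := k) (mexp 1 (e 1 + b)) f else 0 :
      (Fin 2 →₀ ℕ) → k) with hBdef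
  set C : MvPowerSeries (Fin 2) k :=
    (fun e => if e 0 = 0 then MvPowerSeries.coeff (R := k) (mexp 0 (e 1 + c)) f else 0 :
      (Fin 2 →₀ ℕ) → k) with hCdef
  have hA : ∀ e, MvPowerSeries.coeff (R := k) e A = MvPowerSeries.coeff (R := k) (mexp (e 0 + 2) (e 1)) f :=
    fun e => rfl
  have hB : ∀ e, MvPowerSeries.coeff (R := k) e B =
      if e 0 = 0 then MvPowerSeries.coeff (R := k) (mexp 1 (e 1 + b)) f else 0 := fun e => rfl
  have hC : ∀ e, MvPowerSeries.coeff (R := k) e C =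
      if e 0 = 0 then MvPowerSeries.coeff (R := k) (mexp 0 (e 1 + c)) f else 0 := fun e => rfl
  have hf : f = MvPowerSeries.monomial (R := k) (mexp 2 0) 1 * A +
      MvPowerSeries.monomial (R := k) (mexp 1 b) 1 * B +
      MvPowerSeries.monomial (R := k) (mexp 0 c) 1 * C := by
    ext d
    rw [map_add, map_add, coeff_mexp_mul, coeff_mexp_mul, coeff_mexp_mul,
      hA, hB, hC, sub_mexp_apply0, sub_mexp_apply0, sub_mexp_apply0,
      sub_mexp_apply1, sub_mexp_apply1, sub_mexp_apply1]
    conv_lhs => rw [← mexp_eta d]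
    rcases Nat.lt_or_ge (d 0) 1 with hx0 | hx0
    · have hd0 : d 0 = 0 := by omega
      rcases Nat.lt_or_ge (d 1) c with hy | hy
      · simp only [hd0, h0 (d 1) hy]
        simp
        intro h; omega
      · simp [hd0, hy, (by omega : d 1 - c + c = d 1)]
    rcases Nat.lt_or_ge (d 0) 2 with hx0' | hx0'
    · have hd0 : d 0 = 1 := by omega
      rcases Nat.lt_or_ge (d 1) b with hy | hy
      · simp only [hd0, h1 (d 1) hy]
        simp
        intro h; omega
      · simp [hd0, hy, (by omega : d 1 - b + b = d 1)]
    · simp [hx0', (by omega : d 0 - 2 + 2 = d 0)]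
      split_ifs <;> first | (exfalso; omega) | simp
  rw [hf]
  refine Ideal.add_mem _ (Ideal.add_mem _ ?_ ?_) ?_ <;>
    exact Ideal.mul_mem_right _ _ (Ideal.subset_span (by simp))

/-- Staircase decomposition (y-oriented). -/
lemma mem_span_stairY (b c : ℕ) (f : MvPowerSeries (Fin 2) k)
    (h0 : ∀ i : ℕ, i < c → MvPowerSeries.coeff (R := k) (mexp i 0) f = 0)
    (h1 : ∀ i : ℕ, i < b → MvPowerSeries.coeff (R := k) (mexp i 1) f = 0) :
    f ∈ Ideal.span {(MvPowerSeries.monomial (R := k) (mexp 0 2) 1 : MvPowerSeries (Fin 2) k),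
      MvPowerSeries.monomial (R := k) (mexp b 1) 1, MvPowerSeries.monomial (R := k) (mexp c 0) 1} := by
  classical
  set A : MvPowerSeries (Fin 2) k :=
    (fun e => MvPowerSeries.coeff (R := k) (mexp (e 0) (e 1 + 2)) f : (Fin 2 →₀ ℕ) → k) with hAdef
  set B : MvPowerSeries (Fin 2) k :=
    (fun e => if e 1 = 0 then MvPowerSeries.coeff (R := k) (mexp (e 0 + b) 1) f else 0 :
      (Fin 2 →₀ ℕ) → k) with hBdef
  set C : MvPowerSeries (Fin 2) k :=
    (fun e => if e 1 = 0 then MvPowerSeries.coeff (R := k) (mexp (e 0 + c) 0) f else 0 :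
      (Fin 2 →₀ ℕ) → k) with hCdef
  have hA : ∀ e, MvPowerSeries.coeff (R := k) e A = MvPowerSeries.coeff (R := k) (mexp (e 0) (e 1 + 2)) f :=
    fun e => rfl
  have hB : ∀ e, MvPowerSeries.coeff (R := k) e B =
      if e 1 = 0 then MvPowerSeries.coeff (R := k) (mexp (e 0 + b) 1) f else 0 := fun e => rfl
  have hC : ∀ e, MvPowerSeries.coeff (R := k) e C =
      if e 1 = 0 then MvPowerSeries.coeff (R := k) (mexp (e 0 + c) 0) f else 0 := fun e => rfl
  have hf : f = MvPowerSeries.monomial (R := k) (mexp 0 2) 1 * A +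
      MvPowerSeries.monomial (R := k) (mexp b 1) 1 * B +
      MvPowerSeries.monomial (R := k) (mexp c 0) 1 * C := by
    ext d
    rw [map_add, map_add, coeff_mexp_mul, coeff_mexp_mul, coeff_mexp_mul,
      hA, hB, hC, sub_mexp_apply0, sub_mexp_apply0, sub_mexp_apply0,
      sub_mexp_apply1, sub_mexp_apply1, sub_mexp_apply1]
    conv_lhs => rw [← mexp_eta d]
    rcases Nat.lt_or_ge (d 1) 1 with hx0 | hx0
    · have hd0 : d 1 = 0 := by omega
      rcases Nat.lt_or_ge (d 0) c with hy | hy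
      · simp only [hd0, h0 (d 0) hy]
        simp
        intro h; omega
      · simp [hd0, hy, (by omega : d 0 - c + c = d 0)]
    rcases Nat.lt_or_ge (d 1) 2 with hx0' | hx0'
    · have hd0 : d 1 = 1 := by omega
      rcases Nat.lt_or_ge (d 0) b with hy | hy
      · simp only [hd0, h1 (d 0) hy]
        simp
        intro h; omega
      · simp [hd0, hy, (by omega : d 0 - b + b = d 0)]
    · simp [hx0', (by omega : d 1 - 2 + 2 = d 1)]
      split_ifs <;> first | (exfalso; omega) | simp
  rw [hf]
  refine Ideal.add_mem _ (Ideal.add_mem _ ?_ ?_) ?_ <;>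
    exact Ideal.mul_mem_right _ _ (Ideal.subset_span (by simp))

section Weights

variable (k : Type) [Field k]

/-- Quotient map onto `k[s][t]/(t^4)`. -/
noncomputable def mkq : Polynomial (Polynomial k) →ₐ[k] JetTrunc (Polynomial k) 3 :=
  Ideal.Quotient.mkₐ k _

lemma mkq_eq_zero_of_dvd {p : Polynomial (Polynomial k)}
    (h : (Polynomial.X : Polynomial (Polynomial k)) ^ 4 ∣ p) : mkq k p = 0 := by
  rw [mkq, Ideal.Quotient.mkₐ_eq_mk, Ideal.Quotient.eq_zero_iff_mem]
  refine Ideal.mem_span_singleton.mpr ?_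
  norm_num
  exact h

/-- The weight system: `(i,j) ↦ s^(5i+j) t^(αi+βj)`. -/
noncomputable def wgt (α β : ℕ) (d : Fin 2 →₀ ℕ) : JetTrunc (Polynomial k) 3 :=
  mkq k (Polynomial.C ((Polynomial.X : Polynomial k) ^ (5 * d 0 + d 1)) *
    (Polynomial.X : Polynomial (Polynomial k)) ^ (α * d 0 + β * d 1))

lemma wgt_zero (α β : ℕ) : wgt k α β 0 = 1 := by
  simp [wgt]

lemma wgt_mul (α β : ℕ) (d e : Fin 2 →₀ ℕ) :
    wgt k α β d * wgt k α β e = wgt k α β (d + e) := by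
  rw [wgt, wgt, wgt, ← map_mul]
  congr 1
  have e1 : 5 * (d + e) 0 + (d + e) 1 = (5 * d 0 + d 1) + (5 * e 0 + e 1) := by
    simp [Finsupp.add_apply]; ring
  have e2 : α * (d + e) 0 + β * (d + e) 1 = (α * d 0 + β * d 1) + (α * e 0 + β * e 1) := by
    simp [Finsupp.add_apply]; ring
  rw [mul_mul_mul_comm, ← map_mul, ← pow_add, ← pow_add, ← e1, ← e2]

lemma wgt_eq_zero_of_le (α β : ℕ) (d : Fin 2 →₀ ℕ) (h : 4 ≤ α * d 0 + β * d 1) :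
    wgt k α β d = 0 := by
  exact mkq_eq_zero_of_dvd k (Dvd.dvd.mul_left (pow_dvd_pow _ h) _)

lemma wgt_out (α β : ℕ) (hα : 1 ≤ α) (hβ : 1 ≤ β) (d : Fin 2 →₀ ℕ) (hd : d ∉ DD) :
    wgt k α β d = 0 := by
  apply wgt_eq_zero_of_le
  rw [mem_DD, not_and_or, not_lt, not_lt] at hd
  rcases hd with h | h
  · calc (4 : ℕ) ≤ d 0 := h
      _ = 1 * d 0 := (one_mul _).symm
      _ ≤ α * d 0 := Nat.mul_le_mul_right _ hα
      _ ≤ α * d 0 + β * d 1 := Nat.le_add_right _ _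
  · calc (4 : ℕ) ≤ d 1 := h
      _ = 1 * d 1 := (one_mul _).symm
      _ ≤ β * d 1 := Nat.mul_le_mul_right _ hβ
      _ ≤ α * d 0 + β * d 1 := Nat.le_add_left _ _

/-- The generic jet-support test morphism with contact orders `α`, `β`. -/
noncomputable def phigen (α β : ℕ) (hα : 1 ≤ α) (hβ : 1 ≤ β) :
    MvPowerSeries (Fin 2) k →ₐ[k] JetTrunc (Polynomial k) 3 :=
  evalD (wgt k α β) (wgt_zero k α β) (wgt_mul k α β) (wgt_out k α β hα hβ)

lemma phigen_apply (α β : ℕ) (hα : 1 ≤ α) (hβ : 1 ≤ β) (f : MvPowerSeries (Fin 2) k) :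
    phigen k α β hα hβ f = ∑ d ∈ DD, MvPowerSeries.coeff (R := k) d f • wgt k α β d := rfl

/-- Kernel extraction: if the generic test kills `f`, all staircase coefficients vanish. -/
lemma coeff_eq_zero_of_phigen_eq_zero (α β : ℕ) (hα : 1 ≤ α) (hβ : 1 ≤ β)
    (f : MvPowerSeries (Fin 2) k) (h : phigen k α β hα hβ f = 0) (i j : ℕ)
    (hi : i < 4) (hj : j < 4) (hn : α * i + β * j < 4) :
    MvPowerSeries.coeff (R := k) (mexp i j) f = 0 := by
  classical
  set P : Polynomial (Polynomial k) := ∑ d ∈ DD, MvPowerSeries.coeff (R := k) d f •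
    (Polynomial.C ((Polynomial.X : Polynomial k) ^ (5 * d 0 + d 1)) *
      (Polynomial.X : Polynomial (Polynomial k)) ^ (α * d 0 + β * d 1)) with hPdef
  have hphi : phigen k α β hα hβ f = mkq k P := by
    rw [phigen_apply, hPdef, map_sum]
    exact Finset.sum_congr rfl fun d _ => by rw [map_smul]; rfl
  have hdvd : (Polynomial.X : Polynomial (Polynomial k)) ^ 4 ∣ P := by
    have hmem : P ∈ Ideal.span
        {(Polynomial.X : Polynomial (Polynomial k)) ^ (3 + 1)} := by
      rw [← Ideal.Quotient.eq_zero_iff_mem, ← Ideal.Quotient.mkₐ_eq_mk k, ← mkq, ← hphi]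
      exact h
    have := Ideal.mem_span_singleton.mp hmem
    norm_num at this
    exact this
  have hc : P.coeff (α * i + β * j) = 0 := Polynomial.X_pow_dvd_iff.mp hdvd _ hn
  have hcc : (P.coeff (α * i + β * j)).coeff (5 * i + j) = 0 := by rw [hc]; simp
  rw [hPdef, Polynomial.finset_sum_coeff] at hcc
  rw [Polynomial.finset_sum_coeff] at hcc
  have hterm : ∀ d : Fin 2 →₀ ℕ,
      ((MvPowerSeries.coeff (R := k) d f • (Polynomial.C ((Polynomial.X : Polynomial k) ^
          (5 * d 0 + d 1)) * (Polynomial.X : Polynomial (Polynomial k)) ^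
          (α * d 0 + β * d 1))).coeff (α * i + β * j)).coeff (5 * i + j) =
        if α * i + β * j = α * d 0 + β * d 1 ∧ 5 * i + j = 5 * d 0 + d 1 then
          MvPowerSeries.coeff (R := k) d f else 0 := by
    intro d
    rw [Polynomial.coeff_smul, Polynomial.coeff_C_mul, Polynomial.coeff_X_pow]
    by_cases h1 : α * i + β * j = α * d 0 + β * d 1
    · rw [if_pos h1, mul_one, Polynomial.coeff_smul, Polynomial.coeff_X_pow]
      by_cases h2 : 5 * i + j = 5 * d 0 + d 1
      · rw [if_pos h2, if_pos ⟨h1, h2⟩, smul_eq_mul, mul_one]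
      · rw [if_neg h2, if_neg (by tauto), smul_zero]
    · rw [if_neg h1, mul_zero, smul_zero, Polynomial.coeff_zero, if_neg (by tauto)]
  rw [Finset.sum_congr rfl fun d _ => hterm d] at hcc
  rw [Finset.sum_eq_single (mexp i j)] at hcc
  · simpa using hcc
  · intro d hd hne
    rw [mem_DD] at hd
    rw [if_neg]
    rintro ⟨h1, h2⟩
    apply hne
    have hd0 : d 0 = i := by omega
    have hd1 : d 1 = j := by omega
    rw [← mexp_eta d, hd0, hd1]
  · intro hmem
    exact absurd (mem_DD.mpr (by simp [hi, hj])) hmem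

end Weights

section Tests

variable (k : Type) [Field k]

lemma mon20 : MvPowerSeries.monomial (R := k) (mexp 2 0) 1 = xx k ^ 2 := by
  rw [xx, ← X_pow_mul_X_pow]; simp

lemma mon12 : MvPowerSeries.monomial (R := k) (mexp 1 2) 1 = xx k * yy k ^ 2 := by
  rw [xx, yy, ← X_pow_mul_X_pow]; simp

lemma mon04 : MvPowerSeries.monomial (R := k) (mexp 0 4) 1 = yy k ^ 4 := by
  rw [yy, ← X_pow_mul_X_pow]; simp

lemma mon02 : MvPowerSeries.monomial (R := k) (mexp 0 2) 1 = yy k ^ 2 := by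
  rw [yy, ← X_pow_mul_X_pow]; simp

lemma mon21 : MvPowerSeries.monomial (R := k) (mexp 2 1) 1 = yy k * xx k ^ 2 := by
  rw [xx, yy, ← X_pow_mul_X_pow]; simp; ring

lemma mon40 : MvPowerSeries.monomial (R := k) (mexp 4 0) 1 = xx k ^ 4 := by
  rw [xx, ← X_pow_mul_X_pow]; simp

lemma mon11 : MvPowerSeries.monomial (R := k) (mexp 1 1) 1 = xx k * yy k := by
  rw [xx, yy, ← X_pow_mul_X_pow]; simp

lemma xx_mem_m : xx k ∈ mIdeal k 2 := by
  rw [mIdeal, RingHom.mem_ker, xx]; simp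

lemma yy_mem_m : yy k ∈ mIdeal k 2 := by
  rw [mIdeal, RingHom.mem_ker, yy]; simp

variable {A : Type} [CommRing A]

lemma mk_eq_zero_of_dvd {p : Polynomial A} (h : (Polynomial.X : Polynomial A) ^ 4 ∣ p) :
    (Ideal.Quotient.mk (Ideal.span {(Polynomial.X : Polynomial A) ^ (3 + 1)}) p :
      JetTrunc A 3) = 0 := by
  rw [Ideal.Quotient.eq_zero_iff_mem]
  refine Ideal.mem_span_singleton.mpr ?_
  norm_num
  exact h

lemma repr_span_t (z : JetTrunc A 3) (hz : z ∈ Ideal.span {jetT A 3}) :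
    ∃ p : Polynomial A, z = Ideal.Quotient.mk _ ((Polynomial.X : Polynomial A) * p) := by
  obtain ⟨u, hu⟩ := Ideal.mem_span_singleton.mp hz
  obtain ⟨p, rfl⟩ := Ideal.Quotient.mk_surjective u
  exact ⟨p, by rw [hu, jetT, ← map_mul]⟩

lemma sq_zero_repr [IsReduced A] (z : JetTrunc A 3) (hz : z ∈ Ideal.span {jetT A 3})
    (h2 : z * z = 0) :
    ∃ q : Polynomial A, z = Ideal.Quotient.mk _ ((Polynomial.X : Polynomial A) ^ 2 * q) := by
  obtain ⟨p, hp⟩ := repr_span_t z hz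
  rw [hp, ← map_mul, Ideal.Quotient.eq_zero_iff_mem] at h2
  have hdvd : (Polynomial.X : Polynomial A) ^ 4 ∣
      Polynomial.X * p * (Polynomial.X * p) := by
    have := Ideal.mem_span_singleton.mp h2
    norm_num at this
    exact this
  have heq : (Polynomial.X : Polynomial A) * p * (Polynomial.X * p) =
      Polynomial.X ^ 2 * (p * p) := by ring
  rw [heq] at hdvd
  have hc := Polynomial.X_pow_dvd_iff.mp hdvd 2 (by norm_num)
  rw [show (2 : ℕ) = 0 + 2 by norm_num, Polynomial.coeff_X_pow_mul,
    Polynomial.mul_coeff_zero] at hc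
  have h0 : p.coeff 0 = 0 := IsNilpotent.eq_zero ⟨2, by rw [pow_two]; exact hc⟩
  obtain ⟨q, hq⟩ := Polynomial.X_dvd_iff.mpr h0
  refine ⟨q, ?_⟩
  rw [hp, hq]
  congr 1
  ring

/-- Generic tests send the maximal ideal into `(t)`. -/
lemma phigen_max (α β : ℕ) (hα : 1 ≤ α) (hβ : 1 ≤ β) (f : MvPowerSeries (Fin 2) k)
    (hf : f ∈ mIdeal k 2) :
    phigen k α β hα hβ f ∈ Ideal.span {jetT (Polynomial k) 3} := by
  have h0 : MvPowerSeries.coeff (R := k) 0 f = 0 := by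
    rw [MvPowerSeries.coeff_zero_eq_constantCoeff_apply]
    exact RingHom.mem_ker.mp hf
  rw [phigen_apply]
  apply Ideal.sum_mem
  intro d hd
  by_cases hd0 : d = 0
  · rw [hd0, h0, zero_smul]
    exact Submodule.zero_mem _
  · have hne : d 0 ≠ 0 ∨ d 1 ≠ 0 := by
      by_contra hc
      push_neg at hc
      exact hd0 (eq_zero_of_apply_eq_zero d hc.1 hc.2)
    have hε : 1 ≤ α * d 0 + β * d 1 := by
      rcases hne with h | h
      · calc (1 : ℕ) ≤ α * d 0 :=
              Nat.one_le_iff_ne_zero.mpr (Nat.mul_ne_zero (by omega) h)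
          _ ≤ α * d 0 + β * d 1 := Nat.le_add_right _ _
      · calc (1 : ℕ) ≤ β * d 1 :=
              Nat.one_le_iff_ne_zero.mpr (Nat.mul_ne_zero (by omega) h)
          _ ≤ α * d 0 + β * d 1 := Nat.le_add_left _ _
    have hw : wgt k α β d ∈ Ideal.span {jetT (Polynomial k) 3} := by
      rw [Ideal.mem_span_singleton]
      refine ⟨mkq k (Polynomial.C ((Polynomial.X : Polynomial k) ^ (5 * d 0 + d 1)) *
        (Polynomial.X : Polynomial (Polynomial k)) ^ (α * d 0 + β * d 1 - 1)), ?_⟩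
      rw [jetT, wgt, mkq, Ideal.Quotient.mkₐ_eq_mk, ← map_mul]
      refine congrArg (Ideal.Quotient.mk _) ?_
      have hsplit : (Polynomial.X : Polynomial (Polynomial k)) ^ (α * d 0 + β * d 1) =
          Polynomial.X * Polynomial.X ^ (α * d 0 + β * d 1 - 1) := by
        conv_lhs => rw [show α * d 0 + β * d 1 = 1 + (α * d 0 + β * d 1 - 1) from by omega]
        rw [pow_add, pow_one]
      rw [hsplit]
      ring
    exact Submodule.smul_of_tower_mem _ _ hw

/-- The generic test for `I = (x²)`. -/
noncomputable def testI : JetSupportTest k (mIdeal k 2) 3 (Ideal.span {xx k ^ 2}) where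
  A := Polynomial k
  φ := phigen k 2 1 (by norm_num) (by norm_num)
  ker_I := by
    intro f hf
    obtain ⟨g, rfl⟩ := Ideal.mem_span_singleton.mp hf
    have hx2 : phigen k 2 1 (by norm_num) (by norm_num) (xx k ^ 2) = 0 := by
      rw [← mon20, phigen, evalD_monomial _ _ _ _ 2 0 (mem_DD.mpr (by simp))]
      apply wgt_eq_zero_of_le
      simp
    rw [map_mul, hx2, zero_mul]
  max_to_t := phigen_max k 2 1 _ _

/-- The generic test for `J = (y²)`. -/
noncomputable def testJ : JetSupportTest k (mIdeal k 2) 3 (Ideal.span {yy k ^ 2}) where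
  A := Polynomial k
  φ := phigen k 1 2 (by norm_num) (by norm_num)
  ker_I := by
    intro f hf
    obtain ⟨g, rfl⟩ := Ideal.mem_span_singleton.mp hf
    have hy2 : phigen k 1 2 (by norm_num) (by norm_num) (yy k ^ 2) = 0 := by
      rw [← mon02, phigen, evalD_monomial _ _ _ _ 0 2 (mem_DD.mpr (by simp))]
      apply wgt_eq_zero_of_le
      simp
    rw [map_mul, hy2, zero_mul]
  max_to_t := phigen_max k 1 2 _ _

/-- The generic test for `I + J = (x², y²)`. -/
noncomputable def testIJ :
    JetSupportTest k (mIdeal k 2) 3 (Ideal.span {xx k ^ 2} ⊔ Ideal.span {yy k ^ 2}) where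
  A := Polynomial k
  φ := phigen k 2 2 (by norm_num) (by norm_num)
  ker_I := by
    have hx2 : phigen k 2 2 (by norm_num) (by norm_num) (xx k ^ 2) = 0 := by
      rw [← mon20, phigen, evalD_monomial _ _ _ _ 2 0 (mem_DD.mpr (by simp))]
      apply wgt_eq_zero_of_le
      simp
    have hy2 : phigen k 2 2 (by norm_num) (by norm_num) (yy k ^ 2) = 0 := by
      rw [← mon02, phigen, evalD_monomial _ _ _ _ 0 2 (mem_DD.mpr (by simp))]
      apply wgt_eq_zero_of_le
      simp
    intro f hf
    have hle : Ideal.span {xx k ^ 2} ⊔ Ideal.span {yy k ^ 2} ≤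
        RingHom.ker (phigen k 2 2 (by norm_num) (by norm_num)) := by
      apply sup_le <;> rw [Ideal.span_le] <;> intro g hg <;>
        simp only [Set.mem_singleton_iff] at hg <;> subst hg <;>
        simp only [SetLike.mem_coe, RingHom.mem_ker]
      · exact hx2
      · exact hy2
    exact RingHom.mem_ker.mp (hle hf)
  max_to_t := phigen_max k 2 2 _ _

end Tests

section Equalities

variable (k : Type) [Field k]

lemma jsc_I :
    jetSupportClosure k (mIdeal k 2) 3 (Ideal.span {xx k ^ 2}) =
      Ideal.span {xx k ^ 2, xx k * yy k ^ 2, yy k ^ 4} := by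
  apply le_antisymm
  · intro f hf
    have hle : jetSupportClosure k (mIdeal k 2) 3 (Ideal.span {xx k ^ 2}) ≤
        RingHom.ker (testI k).φ := sInf_le ⟨testI k, rfl⟩
    have hker : phigen k 2 1 (by norm_num) (by norm_num) f = 0 := RingHom.mem_ker.mp (hle hf)
    have hst := mem_span_stairX 2 4 f
      (fun j hj => coeff_eq_zero_of_phigen_eq_zero k 2 1 _ _ f hker 0 j (by norm_num)
        (by omega) (by omega))
      (fun j hj => coeff_eq_zero_of_phigen_eq_zero k 2 1 _ _ f hker 1 j (by norm_num)
        (by omega) (by omega))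
    rwa [mon20, mon12, mon04] at hst
  · apply le_sInf
    rintro J ⟨T, rfl⟩
    rw [Ideal.span_le]
    intro g hg
    simp only [Set.mem_insert_iff, Set.mem_singleton_iff] at hg
    have hx2 : T.φ (xx k ^ 2) = 0 :=
      T.ker_I _ (Ideal.subset_span rfl)
    obtain ⟨p, hp⟩ := sq_zero_repr (T.φ (xx k)) (T.max_to_t _ (xx_mem_m k))
      (by rw [← map_mul, ← pow_two]; exact hx2)
    obtain ⟨r, hr⟩ := repr_span_t (T.φ (yy k)) (T.max_to_t _ (yy_mem_m k))
    simp only [SetLike.mem_coe, RingHom.mem_ker]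
    rcases hg with rfl | rfl | rfl
    · exact hx2
    · rw [map_mul, map_pow, hp, hr, ← map_pow, ← map_mul]
      exact mk_eq_zero_of_dvd ⟨p * r ^ 2, by ring⟩
    · rw [map_pow, hr, ← map_pow]
      exact mk_eq_zero_of_dvd ⟨r ^ 4, by ring⟩

lemma jsc_J :
    jetSupportClosure k (mIdeal k 2) 3 (Ideal.span {yy k ^ 2}) =
      Ideal.span {yy k ^ 2, yy k * xx k ^ 2, xx k ^ 4} := by
  apply le_antisymm
  · intro f hf
    have hle : jetSupportClosure k (mIdeal k 2) 3 (Ideal.span {yy k ^ 2}) ≤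
        RingHom.ker (testJ k).φ := sInf_le ⟨testJ k, rfl⟩
    have hker : phigen k 1 2 (by norm_num) (by norm_num) f = 0 := RingHom.mem_ker.mp (hle hf)
    have hst := mem_span_stairY 2 4 f
      (fun i hi => coeff_eq_zero_of_phigen_eq_zero k 1 2 _ _ f hker i 0 (by omega)
        (by norm_num) (by omega))
      (fun i hi => coeff_eq_zero_of_phigen_eq_zero k 1 2 _ _ f hker i 1 (by omega)
        (by norm_num) (by omega))
    rwa [mon02, mon21, mon40] at hst
  · apply le_sInf
    rintro J ⟨T, rfl⟩
    rw [Ideal.span_le]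
    intro g hg
    simp only [Set.mem_insert_iff, Set.mem_singleton_iff] at hg
    have hy2 : T.φ (yy k ^ 2) = 0 :=
      T.ker_I _ (Ideal.subset_span rfl)
    obtain ⟨p, hp⟩ := sq_zero_repr (T.φ (yy k)) (T.max_to_t _ (yy_mem_m k))
      (by rw [← map_mul, ← pow_two]; exact hy2)
    obtain ⟨r, hr⟩ := repr_span_t (T.φ (xx k)) (T.max_to_t _ (xx_mem_m k))
    simp only [SetLike.mem_coe, RingHom.mem_ker]
    rcases hg with rfl | rfl | rfl
    · exact hy2
    · rw [map_mul, map_pow, hp, hr, ← map_pow, ← map_mul]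
      exact mk_eq_zero_of_dvd ⟨p * r ^ 2, by ring⟩
    · rw [map_pow, hr, ← map_pow]
      exact mk_eq_zero_of_dvd ⟨r ^ 4, by ring⟩

lemma jsc_IJ :
    jetSupportClosure k (mIdeal k 2) 3 (Ideal.span {xx k ^ 2} ⊔ Ideal.span {yy k ^ 2}) =
      Ideal.span {xx k ^ 2, xx k * yy k, yy k ^ 2} := by
  apply le_antisymm
  · intro f hf
    have hle : jetSupportClosure k (mIdeal k 2) 3
          (Ideal.span {xx k ^ 2} ⊔ Ideal.span {yy k ^ 2}) ≤
        RingHom.ker (testIJ k).φ := sInf_le ⟨testIJ k, rfl⟩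
    have hker : phigen k 2 2 (by norm_num) (by norm_num) f = 0 := RingHom.mem_ker.mp (hle hf)
    have hst := mem_span_stairX 1 2 f
      (fun j hj => coeff_eq_zero_of_phigen_eq_zero k 2 2 _ _ f hker 0 j (by norm_num)
        (by omega) (by omega))
      (fun j hj => coeff_eq_zero_of_phigen_eq_zero k 2 2 _ _ f hker 1 j (by norm_num)
        (by omega) (by omega))
    rwa [mon20, mon11, mon02] at hst
  · apply le_sInf
    rintro J ⟨T, rfl⟩
    rw [Ideal.span_le]
    intro g hg
    simp only [Set.mem_insert_iff, Set.mem_singleton_iff] at hg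
    have hx2 : T.φ (xx k ^ 2) = 0 :=
      T.ker_I _ (Ideal.mem_sup_left (Ideal.subset_span rfl))
    have hy2 : T.φ (yy k ^ 2) = 0 :=
      T.ker_I _ (Ideal.mem_sup_right (Ideal.subset_span rfl))
    obtain ⟨p, hp⟩ := sq_zero_repr (T.φ (xx k)) (T.max_to_t _ (xx_mem_m k))
      (by rw [← map_mul, ← pow_two]; exact hx2)
    obtain ⟨r, hr⟩ := sq_zero_repr (T.φ (yy k)) (T.max_to_t _ (yy_mem_m k))
      (by rw [← map_mul, ← pow_two]; exact hy2)
    simp only [SetLike.mem_coe, RingHom.mem_ker]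
    rcases hg with rfl | rfl | rfl
    · exact hx2
    · rw [map_mul, hp, hr, ← map_mul]
      exact mk_eq_zero_of_dvd ⟨p * r, by ring⟩
    · exact hy2

lemma xy_not_mem :
    xx k * yy k ∉ Ideal.span {xx k ^ 2, xx k * yy k ^ 2, yy k ^ 4} ⊔
      Ideal.span {yy k ^ 2, yy k * xx k ^ 2, xx k ^ 4} := by
  intro h
  have hsub : Ideal.span {xx k ^ 2, xx k * yy k ^ 2, yy k ^ 4} ⊔
      Ideal.span {yy k ^ 2, yy k * xx k ^ 2, xx k ^ 4} ≤
        Ideal.span {xx k ^ 2, yy k ^ 2} := by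
    apply sup_le <;> rw [Ideal.span_le] <;> intro g hg <;>
      simp only [Set.mem_insert_iff, Set.mem_singleton_iff] at hg
    · rcases hg with rfl | rfl | rfl
      · exact Ideal.subset_span (by simp)
      · exact Ideal.mul_mem_left _ _ (Ideal.subset_span (by simp))
      · rw [show yy k ^ 4 = yy k ^ 2 * yy k ^ 2 from by ring]
        exact Ideal.mul_mem_left _ _ (Ideal.subset_span (by simp))
    · rcases hg with rfl | rfl | rfl
      · exact Ideal.subset_span (by simp)
      · exact Ideal.mul_mem_left _ _ (Ideal.subset_span (by simp))
      · rw [show xx k ^ 4 = xx k ^ 2 * xx k ^ 2 from by ring]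
        exact Ideal.mul_mem_left _ _ (Ideal.subset_span (by simp))
  obtain ⟨a, b, hab⟩ := Ideal.mem_span_pair.mp (hsub h)
  have hco := congrArg (MvPowerSeries.coeff (R := k) (mexp 1 1)) hab
  rw [map_add, ← mon20, ← mon02, ← mon11, MvPowerSeries.coeff_mul_monomial,
    MvPowerSeries.coeff_mul_monomial, MvPowerSeries.coeff_monomial,
    if_neg (fun hc => by simpa using mexp_le_iff.mp hc),
    if_neg (fun hc => by simpa using mexp_le_iff.mp hc), if_pos rfl] at hco
  simp at hco

end Equalities

end JSCaux
/-- jet support closure is not additive. In `R = k[[x, y]]`, with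
`I = (x^2)`, `J = (y^2)`: `I^{3-jsc} = (x^2, xy^2, y^4)`, `J^{3-jsc} = (y^2, x^2y, x^4)`,
`(I+J)^{3-jsc} = (x^2, xy, y^2)`; and `xy ∈ (I+J)^{3-jsc}` but
`xy ∉ I^{3-jsc} + J^{3-jsc}`, so `I^{3-jsc} + J^{3-jsc} ≠ (I+J)^{3-jsc}`. -/
theorem jetSupportClosure_not_additive (k : Type) [Field k] [IsAlgClosed k] [CharZero k] :
    jetSupportClosure k (mIdeal k 2) 3 (Ideal.span {xx k ^ 2}) =
        Ideal.span {xx k ^ 2, xx k * yy k ^ 2, yy k ^ 4} ∧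
      jetSupportClosure k (mIdeal k 2) 3 (Ideal.span {yy k ^ 2}) =
        Ideal.span {yy k ^ 2, yy k * xx k ^ 2, xx k ^ 4} ∧
      jetSupportClosure k (mIdeal k 2) 3 (Ideal.span {xx k ^ 2} ⊔ Ideal.span {yy k ^ 2}) =
        Ideal.span {xx k ^ 2, xx k * yy k, yy k ^ 2} ∧
      xx k * yy k ∈
        jetSupportClosure k (mIdeal k 2) 3 (Ideal.span {xx k ^ 2} ⊔ Ideal.span {yy k ^ 2}) ∧
      xx k * yy k ∉
        jetSupportClosure k (mIdeal k 2) 3 (Ideal.span {xx k ^ 2}) ⊔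
          jetSupportClosure k (mIdeal k 2) 3 (Ideal.span {yy k ^ 2}) ∧
      jetSupportClosure k (mIdeal k 2) 3 (Ideal.span {xx k ^ 2}) ⊔
          jetSupportClosure k (mIdeal k 2) 3 (Ideal.span {yy k ^ 2}) ≠
        jetSupportClosure k (mIdeal k 2) 3
          (Ideal.span {xx k ^ 2} ⊔ Ideal.span {yy k ^ 2}) := by
  refine ⟨JSCaux.jsc_I k, JSCaux.jsc_J k, JSCaux.jsc_IJ k, ?_, ?_, ?_⟩
  · rw [JSCaux.jsc_IJ]
    exact Ideal.subset_span (by simp)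
  · rw [JSCaux.jsc_I, JSCaux.jsc_J]
    exact JSCaux.xy_not_mem k
  · intro h
    have hmem : xx k * yy k ∈ jetSupportClosure k (mIdeal k 2) 3
        (Ideal.span {xx k ^ 2} ⊔ Ideal.span {yy k ^ 2}) := by
      rw [JSCaux.jsc_IJ]
      exact Ideal.subset_span (by simp)
    rw [← h, JSCaux.jsc_I, JSCaux.jsc_J] at hmem
    exact JSCaux.xy_not_mem k hmem
end

section
/- For any ideal I ⊆ R = k[[x_1, ..., x_n]] and any m ∈ ℕ, one has m · I^{m-jc} ⊆ I^{(m+1)-jc}, where m is the maximal ideal of R. -/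
open Polynomial

noncomputable def truncMap (k : Type) [CommRing k] (A : Type) [CommRing A] [Algebra k A]
    (m : ℕ) : JetTrunc A (m + 1) →ₐ[k] JetTrunc A m :=
  Ideal.Quotient.liftₐ _ (Ideal.Quotient.mkₐ k _) (by
    intro a ha
    have h : (Ideal.span {(X : Polynomial A) ^ (m + 1 + 1)} : Ideal (Polynomial A)) ≤
        Ideal.span {(X : Polynomial A) ^ (m + 1)} := by
      rw [Ideal.span_le, Set.singleton_subset_iff]
      exact Ideal.mem_span_singleton.mpr (pow_dvd_pow X (by omega))
    simpa [Ideal.Quotient.eq_zero_iff_mem] using h ha)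

theorem truncMap_mk (k : Type) [CommRing k] (A : Type) [CommRing A] [Algebra k A]
    (m : ℕ) (p : Polynomial A) :
    truncMap k A m (Ideal.Quotient.mk _ p) = Ideal.Quotient.mk _ p := rfl

/-- for any ideal `I ⊆ k[[x_1, ..., x_n]]` and any `m`,
`𝔪 · I^{m-jc} ⊆ I^{(m+1)-jc}`. -/
theorem maximalIdeal_mul_jetClosure_le (k : Type) [Field k] [IsAlgClosed k] [CharZero k]
    (n : ℕ) (I : Ideal (MvPowerSeries (Fin n) k)) (m : ℕ) :
    mIdeal k n * jetClosure k (mIdeal k n) m I ≤ jetClosure k (mIdeal k n) (m + 1) I := by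
  rw [Ideal.mul_le]
  intro g hg f hf
  rw [jetClosure, Ideal.mem_sInf]
  rintro J ⟨T, rfl⟩
  -- build the truncated jet test
  let τ := truncMap k T.A m
  let T' : JetTest k (mIdeal k n) m I :=
    { A := T.A
      φ := τ.comp T.φ
      ker_I := fun f hf => by simp [AlgHom.comp_apply, T.ker_I f hf]
      max_to_t := fun f hf => by
        have := T.max_to_t f hf
        rw [Ideal.mem_span_singleton] at this ⊢
        obtain ⟨c, hc⟩ := this
        exact ⟨τ c, by rw [AlgHom.comp_apply, hc, map_mul]; rfl⟩ }
  -- f lies in the kernel of τ ∘ T.φ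
  have hfker : τ (T.φ f) = 0 := by
    have h0 : f ∈ RingHom.ker T'.φ := Ideal.mem_sInf.mp hf ⟨T', rfl⟩
    rw [RingHom.mem_ker] at h0
    exact h0
  -- hence T.φ f ∈ (t^(m+1))
  obtain ⟨p, hp⟩ := Ideal.Quotient.mk_surjective (I :=
    (Ideal.span {(X : Polynomial T.A) ^ (m + 1 + 1)} : Ideal (Polynomial T.A))) (T.φ f)
  have hpmem : p ∈ Ideal.span {(X : Polynomial T.A) ^ (m + 1)} := by
    rw [← Ideal.Quotient.eq_zero_iff_mem]
    rw [← hp, truncMap_mk] at hfker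
    exact hfker
  obtain ⟨q, hq⟩ := Ideal.mem_span_singleton.mp hpmem
  -- and T.φ g ∈ (t)
  obtain ⟨c, hc⟩ := Ideal.mem_span_singleton.mp (T.max_to_t g hg)
  -- conclude using t^(m+2) = 0
  have ht : (jetT T.A (m + 1)) ^ (m + 1 + 1) = 0 := by
    rw [jetT, ← map_pow, Ideal.Quotient.eq_zero_iff_mem]
    exact Ideal.subset_span rfl
  have hTf : T.φ f = Ideal.Quotient.mk _ q * (jetT T.A (m + 1)) ^ (m + 1) := by
    rw [← hp, hq, map_mul, jetT, ← map_pow, mul_comm]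
  simp only [RingHom.mem_ker, SetLike.mem_coe]
  rw [map_mul, hc, hTf]
  have hring : jetT T.A (m + 1) * c * (Ideal.Quotient.mk _ q * jetT T.A (m + 1) ^ (m + 1))
      = c * Ideal.Quotient.mk _ q * (jetT T.A (m + 1)) ^ (m + 1 + 1) := by ring
  rw [hring, ht, mul_zero]
end
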